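/- arXiv:2302.07110 — 2 statements merged into one kernel-verified Lean document; each statement's English description precedes it below -/
import Mathlib

section
/- Let G be a k-connected graph with independence number α(G) ≤ k + 2, let P be a longest path in G with endpoints x and y, and let H be a component of G - V(P) with attachment point set S. Then: (1) |S| = k; (2) H is a complete graph; (3) P - S has exactly k + 1 components, each with at least |V(H)| vertices; (4) if w and w' lie in distinct components of P - S and rank(w) + rank(w') < |V(H)|, then ww' is not an edge of G; (5) in each component of P - S, the vertices of rank less than |V(H)| form a clique. -/
open SimpleGraph

namespace GallaiFormal

variable {V : Type}

/-- A vertex `v` is a *Gallai vertex* of `G` if every longest path of `G` contains `v`. -/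
def IsGallaiVertex (G : SimpleGraph V) (v : V) : Prop :=
  ∀ ⦃a b : V⦄ (p : G.Walk a b), p.IsPath →
    (∀ ⦃c d : V⦄ (q : G.Walk c d), q.IsPath → q.length ≤ p.length) → v ∈ p.support

/-- `G` has no induced subgraph isomorphic to `H` (`G` is `H`-free). -/
def IsFree {W : Type} (G : SimpleGraph V) (H : SimpleGraph W) : Prop :=
  ¬ ∃ s : Set V, Nonempty (H ≃g (G.induce s))

/-- `A` is an independent set of `G`. -/
def IsIndepSet (G : SimpleGraph V) (A : Set V) : Prop :=
  A.Pairwise fun a b => ¬ G.Adj a b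

/-- `H` is (the vertex set of) a connected component of `G - s`. -/
def IsCompOutside (G : SimpleGraph V) (s : Set V) (H : Set V) : Prop :=
  H.Nonempty ∧ Disjoint H s ∧ (G.induce H).Connected ∧
    ∀ u ∈ H, ∀ v : V, G.Adj u v → v ∉ s → v ∈ H

/-- The set of attachment points of `H` on the path `p`. -/
def attachSet (G : SimpleGraph V) {x y : V} (p : G.Walk x y) (H : Set V) : Set V :=
  {w | w ∈ p.support ∧ ∃ u ∈ H, G.Adj u w}

/-- `p` is an `x`-fiber: a longest path among paths having its first endpoint as an endpoint. -/
def IsEndFiber (G : SimpleGraph V) {x y : V} (p : G.Walk x y) : Prop :=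
  p.IsPath ∧ ∀ (z : V) (q : G.Walk x z), q.IsPath → q.length ≤ p.length

/-- `p` is an `xy`-fiber: a longest path among paths with the same two endpoints. -/
def IsFiberBetween (G : SimpleGraph V) {x y : V} (p : G.Walk x y) : Prop :=
  p.IsPath ∧ ∀ q : G.Walk x y, q.IsPath → q.length ≤ p.length

/-- `p` is a longest path of `G`. -/
def IsLongestPath (G : SimpleGraph V) {x y : V} (p : G.Walk x y) : Prop :=
  p.IsPath ∧ ∀ ⦃a b : V⦄ (q : G.Walk a b), q.IsPath → q.length ≤ p.length

/-- The (index) interval `[a, b]` of positions on `p` is a maximal interval avoiding `S`;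
these intervals correspond to the components of `P - S`. -/
def IsGapInterval (G : SimpleGraph V) {x y : V} (p : G.Walk x y) (S : Set V) (a b : ℕ) : Prop :=
  a ≤ b ∧ b ≤ p.length ∧ (∀ i, a ≤ i → i ≤ b → p.getVert i ∉ S) ∧
    (a = 0 ∨ p.getVert (a - 1) ∈ S) ∧ (b = p.length ∨ p.getVert (b + 1) ∈ S)

/-- The rank of the vertex at position `j` on `p` (w.r.t. the attachment set `S`): the maximum
length of a subpath of `p` ending at position `j` and avoiding `S`. -/
noncomputable def rankAt (G : SimpleGraph V) {x y : V} (p : G.Walk x y) (S : Set V) (j : ℕ) : ℕ :=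
  sSup {r : ℕ | ∃ a : ℕ, a + r = j ∧ ∀ i, a ≤ i → i ≤ j → p.getVert i ∉ S}

/-- `G` is `k`-connected. -/
def IsKConnected [Fintype V] (k : ℕ) (G : SimpleGraph V) : Prop :=
  k < Fintype.card V ∧ ∀ s : Set V, s.ncard < k → (G.induce sᶜ).Connected

/-- `B` is (the vertex set of) a block of `G`: a maximal connected subgraph without cut-vertices. -/
def IsBlock (G : SimpleGraph V) (B : Set V) : Prop :=
  (G.induce B).Connected ∧ (∀ v ∈ B, (G.induce (B \ {v})).Preconnected) ∧
    ∀ B' : Set V, B ⊆ B' → (G.induce B').Connected →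
      (∀ v ∈ B', (G.induce (B' \ {v})).Preconnected) → B' = B

/-- `B` is a special block of `G`: a block such that every longest path contains an edge of `B`. -/
def IsSpecialBlock (G : SimpleGraph V) (B : Set V) : Prop :=
  IsBlock G B ∧ ∀ ⦃a b : V⦄ (p : G.Walk a b), IsLongestPath G p →
    ∃ i < p.length, p.getVert i ∈ B ∧ p.getVert (i + 1) ∈ B

section Infra

variable {G : SimpleGraph V}

open List in
lemma exists_walk_of_chain :
    ∀ (l : List V) (hl : l ≠ []), l.Chain' G.Adj →
      ∃ w : G.Walk (l.head hl) (l.getLast hl), w.support = l := by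
  intro l
  induction l with
  | nil => simp
  | cons a l ih =>
    intro _ hc
    cases l with
    | nil => exact ⟨.nil, rfl⟩
    | cons b l =>
      simp only [List.Chain'] at hc
      rw [List.isChain_cons_cons] at hc
      obtain ⟨w, hw⟩ := ih (by simp) hc.2
      refine ⟨(Walk.cons hc.1 w).copy rfl ?_, (Walk.support_copy _ _ _).trans (congrArg (List.cons a) hw)⟩
      simp [List.getLast_cons_cons]

lemma length_le_of_longest {x y : V} {p : G.Walk x y} (hp : IsLongestPath G p)
    (M : List V) (hc : M.Chain' G.Adj) (hn : M.Nodup) : M.length ≤ p.length + 1 := by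
  rcases eq_or_ne M [] with rfl | hne
  · simp
  · obtain ⟨w, hw⟩ := exists_walk_of_chain M hne hc
    have hpath : w.IsPath := by rw [Walk.isPath_def, hw]; exact hn
    have := hp.2 w hpath
    have hl : w.support.length = w.length + 1 := Walk.length_support w
    rw [hw] at hl
    omega

lemma support_getElem {x y : V} (p : G.Walk x y) :
    ∀ (i : ℕ) (hi : i < p.support.length), p.support[i] = p.getVert i := by
  induction p with
  | nil => simp
  | cons h q ih =>
    intro i hi
    cases i with
    | zero => simp
    | succ i =>
      simp only [Walk.support_cons, List.getElem_cons_succ, Walk.getVert_cons_succ]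
      exact ih i (by simpa [Walk.length_support] using hi)

/-- getVert is injective on indices `≤ length` for a path. -/
lemma getVert_injOn {x y : V} {p : G.Walk x y} (hp : p.IsPath) :
    ∀ {i j : ℕ}, i ≤ p.length → j ≤ p.length → p.getVert i = p.getVert j → i = j := by
  intro i j hi hj hij
  have hnd : p.support.Nodup := hp.support_nodup
  have hlen : p.support.length = p.length + 1 := Walk.length_support p
  have h1 : p.support[i]'(by omega) = p.support[j]'(by omega) := by
    rw [support_getElem, support_getElem]; exact hij
  have := List.Nodup.getElem_inj_iff hnd (hi := by omega) (hj := by omega) |>.mp h1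
  exact this

/-- The slice of the support list of `p` from position `i` to position `j` (inclusive). -/
def psl {x y : V} (p : G.Walk x y) (i j : ℕ) : List V :=
  (p.support.drop i).take (j + 1 - i)

lemma mem_psl_iff {x y : V} {p : G.Walk x y} {i j : ℕ} {v : V} :
    v ∈ psl p i j ↔ ∃ m, i ≤ m ∧ m ≤ j ∧ m ≤ p.length ∧ p.getVert m = v := by
  unfold psl
  rw [List.mem_iff_getElem]
  have hlen : p.support.length = p.length + 1 := Walk.length_support p
  constructor
  · rintro ⟨t, ht, rfl⟩
    simp only [List.getElem_take, List.getElem_drop] at *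
    have h1 : t < j + 1 - i := by
      have := List.length_take_le (j+1-i) (p.support.drop i); omega
    have h2 : i + t < p.support.length := by
      simp [List.length_take, List.length_drop] at ht; omega
    refine ⟨i + t, by omega, by omega, by omega, ?_⟩
    rw [← support_getElem p (i+t) h2]
  · rintro ⟨m, him, hjm, hnm, rfl⟩
    have h2 : m - i < (((p.support.drop i)).take (j+1-i)).length := by
      simp [List.length_take, List.length_drop]; omega
    refine ⟨m - i, h2, ?_⟩
    simp only [List.getElem_take, List.getElem_drop]
    rw [support_getElem p (i + (m - i)) (by omega)]
    congr 1
    omega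

lemma psl_nodup {x y : V} {p : G.Walk x y} (hp : p.IsPath) (i j : ℕ) :
    (psl p i j).Nodup :=
  ((List.take_sublist _ _).trans (List.drop_sublist _ _)).nodup hp.support_nodup

lemma psl_chain' {x y : V} (p : G.Walk x y) (i j : ℕ) :
    (psl p i j).Chain' G.Adj := by
  have h1 : (p.support.drop i).Chain' G.Adj := by
    have := p.isChain_adj_support
    rw [← List.take_append_drop i p.support, List.isChain_append] at this
    exact this.2.1
  simp only [List.Chain'] at h1
  rw [← List.take_append_drop (j+1-i) (p.support.drop i), List.isChain_append] at h1
  exact h1.1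

lemma psl_length {x y : V} {p : G.Walk x y} {i j : ℕ} (hij : i ≤ j) (hj : j ≤ p.length) :
    (psl p i j).length = j + 1 - i := by
  unfold psl
  have hlen : p.support.length = p.length + 1 := Walk.length_support p
  simp [List.length_take, List.length_drop]; omega

lemma psl_ne_nil {x y : V} {p : G.Walk x y} {i j : ℕ} (hij : i ≤ j) (hj : j ≤ p.length) :
    psl p i j ≠ [] := by
  have := psl_length (p := p) hij hj
  intro h
  rw [h] at this
  simp at this; omega

lemma psl_head {x y : V} {p : G.Walk x y} {i j : ℕ} (hij : i ≤ j) (hj : j ≤ p.length)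
    (hne : psl p i j ≠ []) : (psl p i j).head hne = p.getVert i := by
  have h2 : 0 < (psl p i j).length := List.length_pos_iff.mpr hne
  rw [← List.getElem_zero h2]
  simp only [psl, List.getElem_take, List.getElem_drop]
  rw [support_getElem p (i + 0) (by have := Walk.length_support p; omega)]
  congr 1

lemma psl_getLast {x y : V} {p : G.Walk x y} {i j : ℕ} (hij : i ≤ j) (hj : j ≤ p.length)
    (hne : psl p i j ≠ []) : (psl p i j).getLast hne = p.getVert j := by
  have hl : (psl p i j).length = j + 1 - i := psl_length hij hj
  rw [List.getLast_eq_getElem]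
  unfold psl
  simp only [List.getElem_take, List.getElem_drop]
  rw [support_getElem p (i + ((List.take (j + 1 - i) (List.drop i p.support)).length - 1)) (by simp only [List.length_take, List.length_drop]; have := Walk.length_support p; omega)]
  congr 1
  simp only [List.length_take, List.length_drop]
  have := Walk.length_support p
  omega

lemma psl_head? {x y : V} {p : G.Walk x y} {i j : ℕ} (hij : i ≤ j) (hj : j ≤ p.length) :
    (psl p i j).head? = some (p.getVert i) := by
  rw [List.head?_eq_head (psl_ne_nil hij hj), psl_head hij hj]

lemma psl_getLast? {x y : V} {p : G.Walk x y} {i j : ℕ} (hij : i ≤ j) (hj : j ≤ p.length) :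
    (psl p i j).getLast? = some (p.getVert j) := by
  rw [List.getLast?_eq_getLast (psl_ne_nil hij hj), psl_getLast hij hj]

lemma chain'_reverse_adj {l : List V} (h : l.Chain' G.Adj) : l.reverse.Chain' G.Adj := by
  simp only [List.Chain']
  rw [List.isChain_reverse]
  exact List.IsChain.imp (fun ⦃a b⦄ hab => hab.symm) h

lemma psl_full {x y : V} (p : G.Walk x y) : psl p 0 p.length = p.support := by
  unfold psl
  have := Walk.length_support p
  simp [List.take_of_length_le, this]

end Infra
section Lists

variable {G : SimpleGraph V} {H : Set V}

open List in
/-- In a finite clique, there is a Hamiltonian list with prescribed distinct endpoints. -/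
lemma clique_list (hcl : G.IsClique H) (hfin : H.Finite) {u v : V} (hu : u ∈ H) (hv : v ∈ H)
    (huv : u ≠ v) :
    ∃ l : List V, l.Nodup ∧ l.Chain' G.Adj ∧ (∀ z, z ∈ l ↔ z ∈ H) ∧
      l.head? = some u ∧ l.getLast? = some v ∧ l.length = H.ncard := by
  classical
  have hmfin : (H \ {u, v}).Finite := hfin.diff
  set lmid := hmfin.toFinset.toList with hlmid
  have hmid_mem : ∀ z, z ∈ lmid ↔ z ∈ H \ {u, v} := by
    intro z; rw [hlmid, Finset.mem_toList, Set.Finite.mem_toFinset]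
  refine ⟨(u :: lmid) ++ [v], ?_, ?_, ?_, rfl, by rw [List.getLast?_concat], ?_⟩
  · rw [List.nodup_append']
    refine ⟨List.nodup_cons.mpr ⟨fun hmem => ?_, Finset.nodup_toList _⟩, List.nodup_singleton _, ?_⟩
    · exact ((hmid_mem u).mp hmem).2 (by simp)
    · intro a ha hb
      simp only [List.mem_singleton] at hb
      subst hb
      rcases List.mem_cons.mp ha with rfl | ha
      · exact huv rfl
      · exact ((hmid_mem a).mp ha).2 (by simp)
  · have hnd : ((u :: lmid) ++ [v]).Nodup := by
      rw [List.nodup_append']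
      refine ⟨List.nodup_cons.mpr ⟨fun hmem => ((hmid_mem u).mp hmem).2 (by simp),
        Finset.nodup_toList _⟩, List.nodup_singleton _, ?_⟩
      intro a ha hb
      simp only [List.mem_singleton] at hb
      subst hb
      rcases List.mem_cons.mp ha with rfl | ha
      · exact huv rfl
      · exact ((hmid_mem a).mp ha).2 (by simp)
    have hsub : ∀ z ∈ (u :: lmid) ++ [v], z ∈ H := by
      intro z hz
      rcases List.mem_append.mp hz with hz | hz
      · rcases List.mem_cons.mp hz with rfl | hz
        · exact hu
        · exact ((hmid_mem z).mp hz).1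
      · simp only [List.mem_singleton] at hz; subst hz; exact hv
    refine List.Pairwise.isChain ?_
    rw [List.pairwise_iff_forall_sublist]
    intro a b hab
    have hane : a ≠ b := List.pairwise_iff_forall_sublist.mp hnd hab
    exact hcl (hsub a (hab.subset (by simp))) (hsub b (hab.subset (by simp))) hane
  · intro z
    constructor
    · intro hz
      rcases List.mem_append.mp hz with hz | hz
      · rcases List.mem_cons.mp hz with rfl | hz
        · exact hu
        · exact ((hmid_mem z).mp hz).1
      · simp only [List.mem_singleton] at hz; subst hz; exact hv
    · intro hz
      by_cases hzu : z = u
      · subst hzu; simp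
      · by_cases hzv : z = v
        · subst hzv; simp
        · refine List.mem_append.mpr (Or.inl (List.mem_cons.mpr (Or.inr ?_)))
          rw [hmid_mem]
          exact ⟨hz, by simp [hzu, hzv]⟩
  · have h1 : lmid.length = (H \ {u, v}).ncard := by
      rw [hlmid, Finset.length_toList, Set.ncard_eq_toFinset_card _ hmfin]
    have hpair : ({u, v} : Set V).ncard = 2 := by
      rw [Set.ncard_insert_of_notMem (by simp [huv]) (Set.finite_singleton v),
        Set.ncard_singleton]
    have h2 : (H \ {u, v}).ncard = H.ncard - 2 := by
      rw [Set.ncard_diff (s := ({u, v} : Set V)) (t := H)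
        (by simp [Set.insert_subset_iff, hu, hv]) ((Set.finite_singleton v).insert u), hpair]
    have h3 : 2 ≤ H.ncard := by
      have : ({u, v} : Set V).ncard ≤ H.ncard :=
        Set.ncard_le_ncard (by simp [Set.insert_subset_iff, hu, hv]) hfin
      rwa [Set.ncard_insert_of_notMem (by simp [huv]) (Set.finite_singleton v),
        Set.ncard_singleton] at this
    have hfl : ((u :: lmid) ++ [v]).length = lmid.length + 2 := by simp
    omega

open List in
/-- In a finite nonempty clique, a Hamiltonian list with prescribed last element. -/
lemma clique_list_end (hcl : G.IsClique H) (hfin : H.Finite) {v : V} (hv : v ∈ H) :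
    ∃ l : List V, l.Nodup ∧ l.Chain' G.Adj ∧ (∀ z, z ∈ l ↔ z ∈ H) ∧
      l.getLast? = some v ∧ l.length = H.ncard := by
  by_cases h1 : ∃ u ∈ H, u ≠ v
  · obtain ⟨u, hu, huv⟩ := h1
    obtain ⟨l, h⟩ := clique_list hcl hfin hu hv huv
    exact ⟨l, h.1, h.2.1, h.2.2.1, h.2.2.2.2.1, h.2.2.2.2.2⟩
  · push_neg at h1
    have : H = {v} := Set.eq_singleton_iff_unique_mem.mpr ⟨hv, h1⟩
    subst this
    refine ⟨[v], by simp, List.isChain_singleton v, by simp, by simp, ?_⟩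
    rw [Set.ncard_singleton]
    rfl

open List in
/-- In a finite nonempty clique, a Hamiltonian list with prescribed head. -/
lemma clique_list_start (hcl : G.IsClique H) (hfin : H.Finite) {u : V} (hu : u ∈ H) :
    ∃ l : List V, l.Nodup ∧ l.Chain' G.Adj ∧ (∀ z, z ∈ l ↔ z ∈ H) ∧
      l.head? = some u ∧ l.length = H.ncard := by
  obtain ⟨l, h1, h2, h3, h4, h5⟩ := clique_list_end hcl hfin hu
  refine ⟨l.reverse, List.nodup_reverse.mpr h1, chain'_reverse_adj h2, by simpa using h3, ?_,
    by simpa using h5⟩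
  rw [List.head?_reverse]
  exact h4

/-- A connecting list inside a connected induced subgraph. -/
lemma conn_list (hconn : (G.induce H).Connected) {u v : V} (hu : u ∈ H) (hv : v ∈ H) :
    ∃ l : List V, l.Nodup ∧ l.Chain' G.Adj ∧ (∀ z ∈ l, z ∈ H) ∧
      l.head? = some u ∧ l.getLast? = some v ∧ 1 ≤ l.length := by
  classical
  have hreach := hconn.preconnected ⟨u, hu⟩ ⟨v, hv⟩
  obtain ⟨w0⟩ := hreach
  have hw1 : w0.bypass.IsPath := Walk.bypass_isPath w0
  let f := (SimpleGraph.Embedding.induce H (G := G)).toHom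
  have hinj : Function.Injective f := Subtype.val_injective
  let w : G.Walk u v := w0.bypass.map f
  have hpath : w.IsPath := Walk.map_isPath_of_injective hinj hw1
  refine ⟨w.support, hpath.support_nodup, Walk.isChain_adj_support w, ?_, ?_, ?_, ?_⟩
  · intro z hz
    replace hz : z ∈ (w0.bypass.map f).support := hz
    rw [Walk.support_map, List.mem_map] at hz
    obtain ⟨⟨z', hz'⟩, _, rfl⟩ := hz
    exact hz'
  · rw [Walk.support_eq_cons]; rfl
  · rw [List.getLast?_eq_getLast (Walk.support_ne_nil w), Walk.getLast_support]
  · have := Walk.length_support w; omega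

/-- If `C` is a nonempty closed set in the graph induced on `T` and `z ∈ T \ C`,
then the induced graph is not connected. -/
lemma not_connected_of_closed {T C : Set V} (hC : C.Nonempty) (hCT : C ⊆ T)
    (hclosed : ∀ u ∈ C, ∀ v, G.Adj u v → v ∈ T → v ∈ C) {z : V} (hzT : z ∈ T) (hz : z ∉ C) :
    ¬ (G.induce T).Connected := by
  intro hconn
  obtain ⟨c, hc⟩ := hC
  have key : ∀ {a b : T} (w : (G.induce T).Walk a b), a.1 ∈ C → b.1 ∈ C := by
    intro a b w
    induction w with
    | nil => exact id
    | @cons _ b _ h q ih =>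
      intro ha
      exact ih (hclosed _ ha _ h b.2)
  obtain ⟨w⟩ := hconn.preconnected ⟨c, hCT hc⟩ ⟨z, hzT⟩
  exact hz (key w hc)

end Lists
section Surgery

variable {G : SimpleGraph V} {x y : V} {p : G.Walk x y} {H : Set V}

lemma H_not_supp (hH : IsCompOutside G {v | v ∈ p.support} H) {h : V} (hh : h ∈ H) :
    h ∉ p.support := fun hmem => Set.disjoint_left.mp hH.2.1 hh hmem

lemma getVert_mem_supp {i : ℕ} (hi : i ≤ p.length) : p.getVert i ∈ p.support :=
  Walk.mem_support_iff_exists_getVert.mpr ⟨i, rfl, hi⟩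

lemma psl_disjoint {i j i' j' : ℕ} (hp : p.IsPath) (h : j < i') :
    (psl p i j).Disjoint (psl p i' j') := by
  intro z hz hz'
  obtain ⟨m, h1, h2, h3, rfl⟩ := mem_psl_iff.mp hz
  obtain ⟨m', h1', h2', h3', hm'⟩ := mem_psl_iff.mp hz'
  have := getVert_injOn hp h3' h3 hm'
  omega

lemma psl_disjoint_H (hH : IsCompOutside G {v | v ∈ p.support} H)
    {l : List V} (hl : ∀ z ∈ l, z ∈ H) {i j : ℕ} :
    (psl p i j).Disjoint l := by
  intro z hz hz'
  obtain ⟨m, _, _, h3, rfl⟩ := mem_psl_iff.mp hz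
  exact H_not_supp hH (hl _ hz') (getVert_mem_supp h3)

lemma adj_getVert {i : ℕ} (hi : i < p.length) : G.Adj (p.getVert i) (p.getVert (i + 1)) :=
  p.adj_getVert_succ hi

/-- The first endpoint of a longest path is not an attachment point. -/
lemma start_not_attach (hp : IsLongestPath G p)
    (hH : IsCompOutside G {v | v ∈ p.support} H) : p.getVert 0 ∉ attachSet G p H := by
  rintro ⟨hsupp, u, hu, hadj⟩
  rw [Walk.getVert_zero] at hadj
  have hchain : (u :: p.support).Chain' G.Adj := by
    simp only [List.Chain']
    rw [Walk.support_eq_cons, List.isChain_cons_cons]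
    exact ⟨hadj, by rw [← Walk.support_eq_cons]; exact p.isChain_adj_support⟩
  have hnodup : (u :: p.support).Nodup :=
    List.nodup_cons.mpr ⟨H_not_supp hH hu, hp.1.support_nodup⟩
  have := length_le_of_longest hp _ hchain hnodup
  rw [List.length_cons, Walk.length_support] at this
  omega

/-- The last endpoint of a longest path is not an attachment point. -/
lemma end_not_attach (hp : IsLongestPath G p)
    (hH : IsCompOutside G {v | v ∈ p.support} H) : p.getVert p.length ∉ attachSet G p H := by
  rintro ⟨hsupp, u, hu, hadj⟩
  have hchain : (p.support ++ [u]).Chain' G.Adj := by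
    simp only [List.Chain']
    rw [List.isChain_append]
    refine ⟨p.isChain_adj_support, List.isChain_singleton u, ?_⟩
    intro a ha b hb
    rw [List.getLast?_eq_getLast (Walk.support_ne_nil p), Walk.getLast_support,
      Option.mem_def, Option.some_inj] at ha
    simp only [List.head?_cons, Option.mem_def, Option.some_inj] at hb
    subst ha; subst hb
    rw [← Walk.getVert_length p]
    exact hadj.symm
  have hnodup : (p.support ++ [u]).Nodup := by
    rw [List.nodup_append']
    exact ⟨hp.1.support_nodup, List.nodup_singleton u,
      fun a ha hb => by
        simp only [List.mem_singleton] at hb; subst hb; exact H_not_supp hH hu ha⟩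
  have := length_le_of_longest hp _ hchain hnodup
  rw [List.length_append, Walk.length_support] at this
  simp at this
end Surgery
section Surgery2

variable {G : SimpleGraph V} {x y : V} {p : G.Walk x y} {H : Set V}

lemma chain'_glue {A B : List V} (hA : A.Chain' G.Adj) (hB : B.Chain' G.Adj)
    {a b : V} (hA' : A.getLast? = some a) (hB' : B.head? = some b) (hab : G.Adj a b) :
    (A ++ B).Chain' G.Adj := by
  simp only [List.Chain']
  rw [List.isChain_append]
  refine ⟨hA, hB, fun a' ha' b' hb' => ?_⟩
  rw [hA', Option.mem_def, Option.some_inj] at ha'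
  rw [hB', Option.mem_def, Option.some_inj] at hb'
  subst ha'; subst hb'
  exact hab

lemma head?_append_left {A B : List V} {a : V} (hA : A.head? = some a) :
    (A ++ B).head? = some a := by
  cases A with
  | nil => simp at hA
  | cons c l => simpa using hA

/-- No two consecutive vertices of a longest path are both attachment points. -/
lemma no_consec_attach (hp : IsLongestPath G p)
    (hH : IsCompOutside G {v | v ∈ p.support} H) {m : ℕ} (hm : m < p.length)
    (h1 : p.getVert m ∈ attachSet G p H) (h2 : p.getVert (m + 1) ∈ attachSet G p H) :
    False := by
  obtain ⟨_, u, hu, hadj⟩ := h1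
  obtain ⟨_, u', hu', hadj'⟩ := h2
  obtain ⟨lH, hnd, hch, hmem, hhead, hlast, hlen⟩ := conn_list hH.2.2.1 hu hu'
  set n := p.length
  have hlHne : lH ≠ [] := by intro h; rw [h] at hlen; simp at hlen
  set M : List V := psl p 0 m ++ (lH ++ psl p (m+1) n) with hM
  have hchain : M.Chain' G.Adj := by
    refine chain'_glue (psl_chain' p 0 m) ?_ (psl_getLast? (by omega) (by omega))
      (head?_append_left hhead) hadj.symm
    exact chain'_glue hch (psl_chain' p (m+1) n) hlast (psl_head? (by omega) (by omega)) hadj'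
  have hnodup : M.Nodup := by
    rw [hM, List.nodup_append', List.nodup_append']
    refine ⟨psl_nodup hp.1 0 m, ⟨hnd, psl_nodup hp.1 (m+1) n,
      fun z hz hz' => psl_disjoint_H hH (fun w hw => hmem w hw) hz' hz⟩, ?_⟩
    intro z hz hz'
    rcases List.mem_append.mp hz' with hz' | hz'
    · exact psl_disjoint_H hH (fun w hw => hmem w hw) hz hz'
    · exact psl_disjoint hp.1 (by omega) hz hz'
  have hlength := length_le_of_longest hp M hchain hnodup
  rw [hM] at hlength
  simp only [List.length_append] at hlength
  rw [psl_length (by omega) (by omega), psl_length (by omega) (by omega)] at hlength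
  omega

/-- The start of a longest path is not adjacent to the successor of an attachment point. -/
lemma start_not_adj_succ (hp : IsLongestPath G p)
    (hH : IsCompOutside G {v | v ∈ p.support} H) {m : ℕ} (hm : m < p.length) (h0 : 0 < m)
    (h1 : p.getVert m ∈ attachSet G p H)
    (hadj : G.Adj (p.getVert 0) (p.getVert (m + 1))) : False := by
  obtain ⟨_, u, hu, huadj⟩ := h1
  set n := p.length
  set M : List V := [u] ++ ((psl p 0 m).reverse ++ psl p (m+1) n) with hM
  have hchain : M.Chain' G.Adj := by
    refine chain'_glue (List.isChain_singleton u) ?_ rfl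
      (head?_append_left (by rw [List.head?_reverse, psl_getLast? (by omega) (by omega)])) huadj
    exact chain'_glue (chain'_reverse_adj (psl_chain' p 0 m)) (psl_chain' p (m+1) n)
      (by rw [List.getLast?_reverse, psl_head? (Nat.zero_le m) (by omega)])
      (psl_head? (by omega) (by omega)) hadj
  have hnodup : M.Nodup := by
    rw [hM, List.nodup_append', List.nodup_append']
    refine ⟨List.nodup_singleton u, ⟨List.nodup_reverse.mpr (psl_nodup hp.1 0 m),
      psl_nodup hp.1 (m+1) n, fun z hz hz' => psl_disjoint hp.1 (by omega)
        (List.mem_reverse.mp hz) hz'⟩, ?_⟩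
    intro z hz hz'
    simp only [List.mem_singleton] at hz
    subst hz
    rcases List.mem_append.mp hz' with hz' | hz'
    · exact psl_disjoint_H hH (l := [z]) (by intro w hw; simp at hw; subst hw; exact hu)
        (List.mem_reverse.mp hz') (by simp)
    · exact psl_disjoint_H hH (l := [z]) (by intro w hw; simp at hw; subst hw; exact hu)
        hz' (by simp)
  have hlength := length_le_of_longest hp M hchain hnodup
  rw [hM] at hlength
  simp only [List.length_append, List.length_reverse, List.length_singleton] at hlength
  rw [psl_length (by omega) (by omega), psl_length (by omega) (by omega)] at hlength
  omega

/-- Successors of two attachment points are non-adjacent. -/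
lemma succ_not_adj_succ (hp : IsLongestPath G p)
    (hH : IsCompOutside G {v | v ∈ p.support} H) {m₁ m₂ : ℕ} (hlt : m₁ < m₂)
    (hm₂ : m₂ < p.length)
    (h1 : p.getVert m₁ ∈ attachSet G p H) (h2 : p.getVert m₂ ∈ attachSet G p H)
    (hadj : G.Adj (p.getVert (m₁ + 1)) (p.getVert (m₂ + 1))) : False := by
  obtain ⟨_, u, hu, huadj⟩ := h1
  obtain ⟨_, u', hu', huadj'⟩ := h2
  obtain ⟨lH, hnd, hch, hmem, hhead, hlast, hlen⟩ := conn_list hH.2.2.1 hu hu'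
  set n := p.length
  have hlHne : lH ≠ [] := by intro h; rw [h] at hlen; simp at hlen
  set M : List V := psl p 0 m₁ ++ (lH ++ ((psl p (m₁+1) m₂).reverse ++ psl p (m₂+1) n)) with hM
  have hchain : M.Chain' G.Adj := by
    refine chain'_glue (psl_chain' p 0 m₁) ?_ (psl_getLast? (by omega) (by omega))
      (head?_append_left hhead) huadj.symm
    refine chain'_glue hch ?_ hlast
      (head?_append_left (by rw [List.head?_reverse, psl_getLast? (by omega) (by omega)]))
      huadj'
    exact chain'_glue (chain'_reverse_adj (psl_chain' p (m₁+1) m₂)) (psl_chain' p (m₂+1) n)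
      (by rw [List.getLast?_reverse, psl_head? (by omega : m₁+1 ≤ m₂) (by omega)])
      (psl_head? (by omega) (by omega)) hadj
  have hnodup : M.Nodup := by
    rw [hM, List.nodup_append', List.nodup_append', List.nodup_append']
    refine ⟨psl_nodup hp.1 0 m₁, ⟨hnd, ⟨List.nodup_reverse.mpr (psl_nodup hp.1 (m₁+1) m₂),
      psl_nodup hp.1 (m₂+1) n,
      fun z hz hz' => psl_disjoint hp.1 (by omega) (List.mem_reverse.mp hz) hz'⟩, ?_⟩, ?_⟩
    · intro z hz hz'
      rcases List.mem_append.mp hz' with hz' | hz'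
      · exact psl_disjoint_H hH (fun w hw => hmem w hw) (List.mem_reverse.mp hz') hz
      · exact psl_disjoint_H hH (fun w hw => hmem w hw) hz' hz
    · intro z hz hz'
      rcases List.mem_append.mp hz' with hz' | hz'
      · exact psl_disjoint_H hH (fun w hw => hmem w hw) hz hz'
      rcases List.mem_append.mp hz' with hz' | hz'
      · exact psl_disjoint hp.1 (by omega) hz (List.mem_reverse.mp hz')
      · exact psl_disjoint hp.1 (by omega) hz hz'
  have hlength := length_le_of_longest hp M hchain hnodup
  rw [hM] at hlength
  simp only [List.length_append, List.length_reverse] at hlength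
  rw [psl_length (by omega) (by omega), psl_length (by omega) (by omega),
    psl_length (by omega) (by omega)] at hlength
  omega

end Surgery2
section Part12

variable [Fintype V] {G : SimpleGraph V} {k : ℕ} {x y : V} {p : G.Walk x y} {H : Set V}

lemma indep_insert {A : Set V} (hA : IsIndepSet G A) {z : V} (hz : ∀ a ∈ A, ¬ G.Adj z a) :
    IsIndepSet G (insert z A) :=
  Set.pairwise_insert.mpr ⟨hA, fun b hb _ => ⟨hz b hb, fun h => hz b hb h.symm⟩⟩

lemma succ_not_attach (hp : IsLongestPath G p) (hH : IsCompOutside G {v | v ∈ p.support} H)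
    {m : ℕ} (hm : m < p.length) (h1 : p.getVert m ∈ attachSet G p H) :
    p.getVert (m + 1) ∉ attachSet G p H :=
  fun h2 => no_consec_attach hp hH hm h1 h2

lemma succ_not_adj_H (hp : IsLongestPath G p) (hH : IsCompOutside G {v | v ∈ p.support} H)
    {m : ℕ} (hm : m < p.length) (h1 : p.getVert m ∈ attachSet G p H)
    {h : V} (hh : h ∈ H) : ¬ G.Adj h (p.getVert (m + 1)) :=
  fun hadj => succ_not_attach hp hH hm h1 ⟨getVert_mem_supp (by omega), h, hh, hadj⟩

lemma start_not_adj_H (hp : IsLongestPath G p) (hH : IsCompOutside G {v | v ∈ p.support} H)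
    {h : V} (hh : h ∈ H) : ¬ G.Adj h (p.getVert 0) :=
  fun hadj => start_not_attach hp hH ⟨getVert_mem_supp (by omega), h, hh, hadj⟩

/-- The index set of attachment points. -/
lemma attach_eq_image : attachSet G p H =
    p.getVert '' {m | m ≤ p.length ∧ p.getVert m ∈ attachSet G p H} := by
  apply Set.eq_of_subset_of_subset
  · intro s hs
    obtain ⟨m, hm, hmle⟩ := Walk.mem_support_iff_exists_getVert.mp hs.1
    exact ⟨m, ⟨hmle, by rw [hm]; exact hs⟩, hm⟩
  · rintro v ⟨m, ⟨_, hm⟩, rfl⟩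
    exact hm

lemma attachIdx_finite : ({m | m ≤ p.length ∧ p.getVert m ∈ attachSet G p H}).Finite :=
  (Set.finite_Iic p.length).subset fun m hm => hm.1

lemma ncard_attachIdx (hp : p.IsPath) :
    ({m | m ≤ p.length ∧ p.getVert m ∈ attachSet G p H}).ncard = (attachSet G p H).ncard := by
  conv_rhs => rw [attach_eq_image]
  exact (Set.ncard_image_of_injOn (fun a ha b hb hab =>
    getVert_injOn hp ha.1 hb.1 hab)).symm

lemma attachIdx_lt (hp : IsLongestPath G p) (hH : IsCompOutside G {v | v ∈ p.support} H)
    {m : ℕ} (hm : m ∈ {m | m ≤ p.length ∧ p.getVert m ∈ attachSet G p H}) : m < p.length := by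
  obtain ⟨hm1, hm2⟩ := hm
  rcases Nat.lt_or_ge m p.length with h | h
  · exact h
  · exfalso
    have heq : m = p.length := by omega
    exact end_not_attach hp hH (heq ▸ hm2)

lemma attachIdx_pos (hp : IsLongestPath G p) (hH : IsCompOutside G {v | v ∈ p.support} H)
    {m : ℕ} (hm : m ∈ {m | m ≤ p.length ∧ p.getVert m ∈ attachSet G p H}) : 0 < m := by
  rcases Nat.eq_zero_or_pos m with h | h
  · exact absurd (h ▸ hm.2) (start_not_attach hp hH)
  · exact h

/-- The successor set is independent. -/
lemma succ_indep (hp : IsLongestPath G p) (hH : IsCompOutside G {v | v ∈ p.support} H) :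
    IsIndepSet G ((fun m => p.getVert (m + 1)) ''
      {m | m ≤ p.length ∧ p.getVert m ∈ attachSet G p H}) := by
  rintro a ⟨m₁, hm₁, rfl⟩ b ⟨m₂, hm₂, rfl⟩ hne hadj
  have hn1 : m₁ < p.length := attachIdx_lt hp hH hm₁
  have hn2 : m₂ < p.length := attachIdx_lt hp hH hm₂
  rcases lt_trichotomy m₁ m₂ with h | h | h
  · exact succ_not_adj_succ hp hH h hn2 hm₁.2 hm₂.2 hadj
  · exact hne (by rw [h])
  · exact succ_not_adj_succ hp hH h hn1 hm₂.2 hm₁.2 hadj.symm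

lemma start_notmem_succ (hp : IsLongestPath G p)
    (hH : IsCompOutside G {v | v ∈ p.support} H) :
    p.getVert 0 ∉ ((fun m => p.getVert (m + 1)) ''
      {m | m ≤ p.length ∧ p.getVert m ∈ attachSet G p H}) := by
  rintro ⟨m, hm, heq⟩
  have hmn : m < p.length := attachIdx_lt hp hH hm
  have := getVert_injOn hp.1 (by omega : m + 1 ≤ p.length) (by omega : 0 ≤ p.length) heq
  omega

lemma start_indep_succ (hp : IsLongestPath G p)
    (hH : IsCompOutside G {v | v ∈ p.support} H) :
    ∀ a ∈ ((fun m => p.getVert (m + 1)) ''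
      {m | m ≤ p.length ∧ p.getVert m ∈ attachSet G p H}),
      ¬ G.Adj (p.getVert 0) a := by
  rintro a ⟨m, hm, rfl⟩ hadj
  exact start_not_adj_succ hp hH (attachIdx_lt hp hH hm) (attachIdx_pos hp hH hm) hm.2 hadj

lemma H_not_adj_succ (hp : IsLongestPath G p)
    (hH : IsCompOutside G {v | v ∈ p.support} H) {h : V} (hh : h ∈ H) :
    ∀ a ∈ ((fun m => p.getVert (m + 1)) ''
      {m | m ≤ p.length ∧ p.getVert m ∈ attachSet G p H}),
      ¬ G.Adj h a := by
  rintro a ⟨m, hm, rfl⟩ hadj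
  exact succ_not_adj_H hp hH (attachIdx_lt hp hH hm) hm.2 hh hadj

lemma getVert_mem_supp_any (i : ℕ) : p.getVert i ∈ p.support := by
  rcases Nat.le_total i p.length with h | h
  · exact getVert_mem_supp h
  · rw [Walk.getVert_of_length_le p h]; exact Walk.end_mem_support p

lemma H_notmem_succ (hH : IsCompOutside G {v | v ∈ p.support} H) {h : V} (hh : h ∈ H) :
    h ∉ ((fun m => p.getVert (m + 1)) ''
      {m | m ≤ p.length ∧ p.getVert m ∈ attachSet G p H}) := by
  rintro ⟨m, hm, heq⟩
  exact H_not_supp hH hh (heq ▸ getVert_mem_supp_any (m + 1))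

lemma ncard_succ_set (hp : IsLongestPath G p)
    (hH : IsCompOutside G {v | v ∈ p.support} H) :
    ((fun m => p.getVert (m + 1)) ''
      {m | m ≤ p.length ∧ p.getVert m ∈ attachSet G p H}).ncard =
      ({m | m ≤ p.length ∧ p.getVert m ∈ attachSet G p H}).ncard :=
  Set.ncard_image_of_injOn (fun a ha b hb hab => by
    have ha' := attachIdx_lt hp hH ha
    have hb' := attachIdx_lt hp hH hb
    have := getVert_injOn hp.1 (by omega : a + 1 ≤ p.length) (by omega : b + 1 ≤ p.length) hab
    omega)

/-- Part (1), upper bound. -/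
lemma attach_ncard_le (halpha : ∀ A : Set V, IsIndepSet G A → A.ncard ≤ k + 2)
    (hp : IsLongestPath G p) (hH : IsCompOutside G {v | v ∈ p.support} H) :
    (attachSet G p H).ncard ≤ k := by
  obtain ⟨h, hh⟩ := hH.1
  set SS := ((fun m => p.getVert (m + 1)) ''
      {m | m ≤ p.length ∧ p.getVert m ∈ attachSet G p H}) with hSS
  have hind : IsIndepSet G (insert (p.getVert 0) (insert h SS)) := by
    refine indep_insert (indep_insert (succ_indep hp hH) (H_not_adj_succ hp hH hh)) ?_
    intro a ha
    rcases Set.mem_insert_iff.mp ha with rfl | ha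
    · intro hadj
      exact start_not_adj_H hp hH hh hadj.symm
    · exact start_indep_succ hp hH a ha
  have hcard := halpha _ hind
  have h1 : h ∉ SS := H_notmem_succ hH hh
  have h2 : p.getVert 0 ∉ insert h SS := by
    rintro (rfl | h2)
    · exact H_not_supp hH hh (getVert_mem_supp (by omega : 0 ≤ p.length))
    · exact start_notmem_succ hp hH h2
  rw [Set.ncard_insert_of_notMem h2, Set.ncard_insert_of_notMem h1, ncard_succ_set hp hH,
    ncard_attachIdx hp.1] at hcard
  omega

/-- Part (1), lower bound. -/
lemma attach_ncard_ge (hconn : IsKConnected k G)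
    (hp : IsLongestPath G p) (hH : IsCompOutside G {v | v ∈ p.support} H) :
    k ≤ (attachSet G p H).ncard := by
  by_contra hlt
  push_neg at hlt
  have hc := hconn.2 (attachSet G p H) hlt
  have hx : p.getVert 0 ∈ (attachSet G p H)ᶜ := start_not_attach hp hH
  refine not_connected_of_closed (T := (attachSet G p H)ᶜ) (C := H) hH.1 ?_ ?_ hx ?_ hc
  · intro h hh
    exact fun hmem => H_not_supp hH hh hmem.1
  · intro u hu v hadj hv
    by_cases hsupp : v ∈ p.support
    · exact absurd ⟨hsupp, u, hu, hadj⟩ hv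
    · exact hH.2.2.2 u hu v hadj hsupp
  · intro hmem
    exact H_not_supp hH hmem (getVert_mem_supp (by omega : 0 ≤ p.length))

/-- Part (1). -/
lemma attach_ncard (hconn : IsKConnected k G)
    (halpha : ∀ A : Set V, IsIndepSet G A → A.ncard ≤ k + 2)
    (hp : IsLongestPath G p) (hH : IsCompOutside G {v | v ∈ p.support} H) :
    (attachSet G p H).ncard = k :=
  le_antisymm (attach_ncard_le halpha hp hH) (attach_ncard_ge hconn hp hH)

/-- Part (2): `H` is a clique. -/
lemma H_clique (hconn : IsKConnected k G)
    (halpha : ∀ A : Set V, IsIndepSet G A → A.ncard ≤ k + 2)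
    (hp : IsLongestPath G p) (hH : IsCompOutside G {v | v ∈ p.support} H) :
    G.IsClique H := by
  intro u hu v hv hne
  by_contra hnadj
  set SS := ((fun m => p.getVert (m + 1)) ''
      {m | m ≤ p.length ∧ p.getVert m ∈ attachSet G p H}) with hSS
  have hind : IsIndepSet G (insert u (insert v (insert (p.getVert 0) SS))) := by
    refine indep_insert (indep_insert (indep_insert (succ_indep hp hH)
      (start_indep_succ hp hH)) ?_) ?_
    · intro a ha
      rcases Set.mem_insert_iff.mp ha with rfl | ha
      · exact fun hadj => start_not_adj_H hp hH hv hadj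
      · exact H_not_adj_succ hp hH hv a ha
    · intro a ha
      rcases Set.mem_insert_iff.mp ha with rfl | ha
      · exact hnadj
      rcases Set.mem_insert_iff.mp ha with rfl | ha
      · exact fun hadj => start_not_adj_H hp hH hu hadj
      · exact H_not_adj_succ hp hH hu a ha
  have hcard := halpha _ hind
  have h0 : p.getVert 0 ∉ SS := start_notmem_succ hp hH
  have h1 : v ∉ insert (p.getVert 0) SS := by
    rintro (rfl | h1)
    · exact H_not_supp hH hv (getVert_mem_supp (by omega : 0 ≤ p.length))
    · exact H_notmem_succ hH hv h1
  have h2 : u ∉ insert v (insert (p.getVert 0) SS) := by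
    rintro (rfl | rfl | h2)
    · exact hne rfl
    · exact H_not_supp hH hu (getVert_mem_supp (by omega : 0 ≤ p.length))
    · exact H_notmem_succ hH hu h2
  rw [Set.ncard_insert_of_notMem h2, Set.ncard_insert_of_notMem h1,
    Set.ncard_insert_of_notMem h0, ncard_succ_set hp hH, ncard_attachIdx hp.1] at hcard
  have hge := attach_ncard_ge hconn hp hH
  omega

end Part12
section Bad

variable [Fintype V] {G : SimpleGraph V} {k : ℕ} {x y : V} {p : G.Walk x y} {H : Set V}

/-- For two distinct attachment points there are distinct H-neighbours (if `|H| ≥ 2`). -/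
lemma exists_distinct_nbrs (hconn : IsKConnected k G)
    (halpha : ∀ A : Set V, IsIndepSet G A → A.ncard ≤ k + 2)
    (hp : IsLongestPath G p) (hH : IsCompOutside G {v | v ∈ p.support} H)
    {s t : V} (hs : s ∈ attachSet G p H) (ht : t ∈ attachSet G p H) (hst : s ≠ t)
    (h2 : 2 ≤ H.ncard) :
    ∃ u v, u ∈ H ∧ v ∈ H ∧ u ≠ v ∧ G.Adj u s ∧ G.Adj v t := by
  by_contra hno
  push_neg at hno
  obtain ⟨u0, hu0, hu0adj⟩ := hs.2
  obtain ⟨v0, hv0, hv0adj⟩ := ht.2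
  have hw : u0 = v0 := by
    by_contra hne
    exact hno u0 v0 hu0 hv0 hne hu0adj hv0adj
  subst hw
  have hNs : ∀ u ∈ H, G.Adj u s → u = u0 := by
    intro u hu hadj
    by_contra hne
    exact hno u u0 hu hu0 hne hadj hv0adj
  have hNt : ∀ v ∈ H, G.Adj v t → v = u0 := by
    intro v hv hadj
    by_contra hne
    exact hno u0 v hu0 hv (fun h => hne h.symm) hu0adj hadj
  have hSk : (attachSet G p H).ncard = k := attach_ncard hconn halpha hp hH
  have hstS : ({s, t} : Set V) ⊆ attachSet G p H := by
    intro z hz; rcases hz with rfl | hz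
    · exact hs
    · rw [Set.mem_singleton_iff] at hz; subst hz; exact ht
  have hk2 : 2 ≤ k := by
    have h1 : ({s, t} : Set V).ncard = 2 := by
      rw [Set.ncard_insert_of_notMem (by simpa using hst), Set.ncard_singleton]
    have := Set.ncard_le_ncard hstS (Set.toFinite _)
    omega
  set W : Set V := insert u0 (attachSet G p H \ {s, t}) with hW
  have hWcard : W.ncard < k := by
    have h1 : u0 ∉ attachSet G p H \ {s, t} := by
      intro hmem
      exact H_not_supp hH hu0 hmem.1.1
    have h2' : (attachSet G p H \ {s, t}).ncard = k - 2 := by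
      rw [Set.ncard_diff hstS (Set.toFinite _),
        Set.ncard_insert_of_notMem (by simpa using hst), Set.ncard_singleton, hSk]
    rw [hW, Set.ncard_insert_of_notMem h1, h2']
    omega
  have hc := hconn.2 W hWcard
  have hCne : (H \ {u0}).Nonempty := by
    apply Set.nonempty_of_ncard_ne_zero
    rw [Set.ncard_diff_singleton_of_mem hu0]
    omega
  refine not_connected_of_closed (G := G) (T := Wᶜ) (C := H \ {u0}) hCne ?_ ?_
    (z := p.getVert 0) ?_ ?_ hc
  · rintro h ⟨hh, hhw⟩
    intro hmem
    rcases hmem with hmem | hmem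
    · exact hhw hmem
    · exact H_not_supp hH hh hmem.1.1
  · rintro u' ⟨hu', hu'w⟩ g hadj hg
    by_cases hsupp : g ∈ p.support
    · exfalso
      have hgS : g ∈ attachSet G p H := ⟨hsupp, u', hu', hadj⟩
      have : g = s ∨ g = t := by
        by_contra hgst
        push_neg at hgst
        exact hg (Or.inr ⟨hgS, by simp [hgst.1, hgst.2]⟩)
      rcases this with rfl | rfl
      · exact hu'w (Set.mem_singleton_iff.mpr (hNs u' hu' hadj))
      · exact hu'w (Set.mem_singleton_iff.mpr (hNt u' hu' hadj))
    · have hgH : g ∈ H := hH.2.2.2 u' hu' g hadj hsupp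
      refine ⟨hgH, ?_⟩
      intro hgw
      exact hg (Or.inl hgw)
  · intro hmem
    rcases hmem with hmem | hmem
    · rw [← hmem] at hu0
      exact H_not_supp hH hu0 (getVert_mem_supp (Nat.zero_le _))
    · exact start_not_attach hp hH hmem.1
  · rintro ⟨hmem, -⟩
    exact H_not_supp hH hmem (getVert_mem_supp (Nat.zero_le _))

/-- Basic properties of `rankAt`. -/
lemma rank_spec {S : Set V} {j : ℕ} (hj : p.getVert j ∉ S) :
    ∃ a, a ≤ j ∧ rankAt G p S j = j - a ∧ (∀ i, a ≤ i → i ≤ j → p.getVert i ∉ S) ∧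
      (a = 0 ∨ p.getVert (a - 1) ∈ S) ∧
      (∀ a', (∀ i, a' ≤ i → i ≤ j → p.getVert i ∉ S) → a ≤ a') := by
  classical
  set AS : Set ℕ := {a | ∀ i, a ≤ i → i ≤ j → p.getVert i ∉ S} with hAS
  have hjAS : j ∈ AS := by
    intro i h1 h2
    have : i = j := by omega
    subst this; exact hj
  have hne : AS.Nonempty := ⟨j, hjAS⟩
  set a := sInf AS with ha
  have haAS : a ∈ AS := Nat.sInf_mem hne
  have haj : a ≤ j := Nat.sInf_le hjAS
  have hmin : ∀ a', (∀ i, a' ≤ i → i ≤ j → p.getVert i ∉ S) → a ≤ a' :=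
    fun a' h' => Nat.sInf_le h'
  refine ⟨a, haj, ?_, haAS, ?_, hmin⟩
  · -- rankAt = j - a
    unfold rankAt
    set R : Set ℕ := {r | ∃ c : ℕ, c + r = j ∧ ∀ i, c ≤ i → i ≤ j → p.getVert i ∉ S} with hR
    have hmem : j - a ∈ R := ⟨a, by omega, haAS⟩
    have hub : ∀ r ∈ R, r ≤ j - a := by
      rintro r ⟨c, hc, hcAS⟩
      have := hmin c hcAS
      omega
    exact le_antisymm (csSup_le ⟨_, hmem⟩ hub) (le_csSup ⟨j - a, hub⟩ hmem)
  · -- left maximality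
    rcases Nat.eq_zero_or_pos a with h0 | hpos
    · exact Or.inl h0
    · right
      by_contra hnot
      have : a - 1 ∈ AS := by
        intro i h1 h2
        rcases Nat.lt_or_ge i a with h | h
        · have : i = a - 1 := by omega
          subst this; exact hnot
        · exact haAS i h h2
      have := Nat.sInf_le this
      omega

/-- Inside a gap interval the rank is the distance to the left end. -/
lemma rank_in_gap {S : Set V} {a b : ℕ} (hgap : IsGapInterval G p S a b) {i : ℕ}
    (hai : a ≤ i) (hib : i ≤ b) : rankAt G p S i = i - a := by
  obtain ⟨hab, hbn, hrun, hleft, _⟩ := hgap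
  obtain ⟨a', ha'i, hrk, hrun', hleft', hmin'⟩ := rank_spec (p := p)
    (S := S) (j := i) (hrun i hai hib)
  have h1 : a' ≤ a := hmin' a (fun m h1 h2 => hrun m h1 (by omega))
  have h2 : a = a' := by
    rcases Nat.eq_zero_or_pos a with h0 | hpos
    · omega
    · rcases hleft with h | h
      · omega
      · by_contra hne
        exact hrun' (a - 1) (by omega) (by omega) h
  rw [hrk, h2]

end Bad
section Gap

variable [Fintype V] {G : SimpleGraph V} {k : ℕ} {x y : V} {p : G.Walk x y} {H : Set V}

lemma gap_b_lt (hp : IsLongestPath G p) (hH : IsCompOutside G {v | v ∈ p.support} H)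
    {b : ℕ} (hbn : b ≤ p.length) (htS : p.getVert (b + 1) ∈ attachSet G p H) :
    b < p.length := by
  rcases Nat.lt_or_ge b p.length with h | h
  · exact h
  · exfalso
    have hbe : b = p.length := by omega
    subst hbe
    rw [Walk.getVert_of_length_le p (by omega)] at htS
    refine end_not_attach hp hH ?_
    rw [Walk.getVert_length]
    exact htS

lemma gap_a_pos (hp : IsLongestPath G p) (hH : IsCompOutside G {v | v ∈ p.support} H)
    {a : ℕ} (hsS : p.getVert (a - 1) ∈ attachSet G p H) : 1 ≤ a := by
  rcases Nat.eq_zero_or_pos a with h | h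
  · exfalso
    subst h
    exact start_not_attach hp hH hsS
  · exact h

/-- Part (3b): each gap interval has at least `|H|` vertices. -/
lemma gap_size (hconn : IsKConnected k G)
    (halpha : ∀ A : Set V, IsIndepSet G A → A.ncard ≤ k + 2)
    (hp : IsLongestPath G p) (hH : IsCompOutside G {v | v ∈ p.support} H)
    {a b : ℕ} (hgap : IsGapInterval G p (attachSet G p H) a b) : H.ncard ≤ b - a + 1 := by
  obtain ⟨hab, hbn, hrun, hleft, hright⟩ := hgap
  set n := p.length with hn
  rcases Nat.lt_or_ge H.ncard 2 with hH2 | hH2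
  · omega
  have hcl := H_clique hconn halpha hp hH
  have hfin : H.Finite := Set.toFinite H
  rcases hleft with ha0 | hsS
  · subst ha0
    rcases hright with hbn' | htS
    · -- a = 0, b = n : a Hamiltonian path of H alone
      obtain ⟨v0, hv0⟩ := hH.1
      obtain ⟨l, hnd, hch, hmem, _, hlen⟩ := clique_list_end hcl hfin hv0
      have := length_le_of_longest hp l hch hnd
      omega
    · -- a = 0, b < n
      have hblt : b < n := gap_b_lt hp hH hbn htS
      obtain ⟨v0, hv0, hv0adj⟩ := htS.2
      obtain ⟨l, hnd, hch, hmem, hlast, hlen⟩ := clique_list_end hcl hfin hv0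
      set M : List V := l ++ psl p (b+1) n with hM
      have hchain : M.Chain' G.Adj :=
        chain'_glue hch (psl_chain' p (b+1) n) hlast (psl_head? (by omega) (by omega)) hv0adj
      have hnodup : M.Nodup := by
        rw [hM, List.nodup_append']
        exact ⟨hnd, psl_nodup hp.1 (b+1) n,
          (psl_disjoint_H hH (fun z hz => (hmem z).mp hz)).symm⟩
      have hle := length_le_of_longest hp M hchain hnodup
      rw [hM, List.length_append, psl_length (by omega) (by omega), hlen] at hle
      omega
  · have hapos : 1 ≤ a := gap_a_pos hp hH hsS
    obtain ⟨u0, hu0, hu0adj⟩ := hsS.2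
    rcases hright with hbn' | htS
    · -- b = n, a ≥ 1
      obtain ⟨l, hnd, hch, hmem, hhead, hlen⟩ := clique_list_start hcl hfin hu0
      set M : List V := psl p 0 (a-1) ++ l with hM
      have hchain : M.Chain' G.Adj :=
        chain'_glue (psl_chain' p 0 (a-1)) hch (psl_getLast? (by omega) (by omega)) hhead
          hu0adj.symm
      have hnodup : M.Nodup := by
        rw [hM, List.nodup_append']
        exact ⟨psl_nodup hp.1 0 (a-1), hnd, psl_disjoint_H hH (fun z hz => (hmem z).mp hz)⟩
      have hle := length_le_of_longest hp M hchain hnodup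
      rw [hM, List.length_append, psl_length (by omega) (by omega), hlen] at hle
      omega
    · -- interior gap
      have hblt : b < n := gap_b_lt hp hH hbn htS
      have hne : p.getVert (a-1) ≠ p.getVert (b+1) := by
        intro h
        have := getVert_injOn hp.1 (by omega : a - 1 ≤ p.length) (by omega : b + 1 ≤ p.length) h
        omega
      obtain ⟨u, v, hu, hv, huv, hus, hvt⟩ :=
        exists_distinct_nbrs hconn halpha hp hH hsS htS hne hH2
      obtain ⟨l, hnd, hch, hmem, hhead, hlast, hlen⟩ := clique_list hcl hfin hu hv huv
      set M : List V := psl p 0 (a-1) ++ (l ++ psl p (b+1) n) with hM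
      have hchain : M.Chain' G.Adj := by
        refine chain'_glue (psl_chain' p 0 (a-1)) ?_ (psl_getLast? (by omega) (by omega))
          (head?_append_left hhead) hus.symm
        exact chain'_glue hch (psl_chain' p (b+1) n) hlast (psl_head? (by omega) (by omega)) hvt
      have hnodup : M.Nodup := by
        rw [hM, List.nodup_append', List.nodup_append']
        refine ⟨psl_nodup hp.1 0 (a-1), ⟨hnd, psl_nodup hp.1 (b+1) n,
          (psl_disjoint_H hH (fun z hz => (hmem z).mp hz)).symm⟩, ?_⟩
        intro z hz hz'
        rcases List.mem_append.mp hz' with hz' | hz'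
        · exact psl_disjoint_H hH (fun w hw => (hmem w).mp hw) hz hz'
        · exact psl_disjoint hp.1 (by omega) hz hz'
      have hle := length_le_of_longest hp M hchain hnodup
      rw [hM, List.length_append, List.length_append, psl_length (by omega) (by omega),
        psl_length (by omega) (by omega), hlen] at hle
      omega

end Gap
section Part4

variable [Fintype V] {G : SimpleGraph V} {k : ℕ} {x y : V} {p : G.Walk x y} {H : Set V}

/-- Part (4): vertices in distinct gaps whose ranks sum to less than `|H|` are non-adjacent. -/
lemma rank_nonadj (hconn : IsKConnected k G)
    (halpha : ∀ A : Set V, IsIndepSet G A → A.ncard ≤ k + 2)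
    (hp : IsLongestPath G p) (hH : IsCompOutside G {v | v ∈ p.support} H)
    {i j : ℕ} (hij : i < j) (hjn : j ≤ p.length)
    (hiS : p.getVert i ∉ attachSet G p H) (hjS : p.getVert j ∉ attachSet G p H)
    (hbet : ∃ m, i < m ∧ m < j ∧ p.getVert m ∈ attachSet G p H)
    (hrank : rankAt G p (attachSet G p H) i + rankAt G p (attachSet G p H) j < H.ncard) :
    ¬ G.Adj (p.getVert i) (p.getVert j) := by
  intro hadj
  set n := p.length with hn
  obtain ⟨a, hai, hrki, hruni, hlefti, hmini⟩ := rank_spec (S := attachSet G p H) hiS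
  obtain ⟨a', haj, hrkj, hrunj, hleftj, hminj⟩ := rank_spec (S := attachSet G p H) hjS
  rw [hrki, hrkj] at hrank
  obtain ⟨m, him, hmj, hmS⟩ := hbet
  have ha'm : m < a' := by
    by_contra hle
    push_neg at hle
    exact hrunj m hle (by omega) hmS
  have ha'1 : i + 2 ≤ a' := by omega
  have htS : p.getVert (a' - 1) ∈ attachSet G p H := by
    rcases hleftj with h0 | h
    · omega
    · exact h
  obtain ⟨v0, hv0, hv0adj⟩ := htS.2
  have hcl := H_clique hconn halpha hp hH
  have hfin : H.Finite := Set.toFinite H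
  have hH1 : 1 ≤ H.ncard := by omega
  have hadji : G.Adj (p.getVert (i+1)) (p.getVert i) := (adj_getVert (by omega)).symm
  -- the tail of the new walk, shared by both cases
  have hT3chain : ([p.getVert i] ++ psl p j n).Chain' G.Adj :=
    chain'_glue (List.isChain_singleton _) (psl_chain' p j n) rfl
      (psl_head? (by omega) (by omega)) hadj
  have hRchain : ((psl p (i+1) (a'-1)).reverse ++ ([p.getVert i] ++ psl p j n)).Chain' G.Adj := by
    refine chain'_glue (chain'_reverse_adj (psl_chain' p (i+1) (a'-1))) hT3chain
      (by rw [List.getLast?_reverse, psl_head? (by omega : i+1 ≤ a'-1) (by omega)]) rfl hadji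
  have hRnodup : ((psl p (i+1) (a'-1)).reverse ++ ([p.getVert i] ++ psl p j n)).Nodup := by
    rw [List.nodup_append', List.nodup_append']
    refine ⟨List.nodup_reverse.mpr (psl_nodup hp.1 _ _), ⟨List.nodup_singleton _,
      psl_nodup hp.1 _ _, ?_⟩, ?_⟩
    · intro z hz hz'
      simp only [List.mem_singleton] at hz
      subst hz
      obtain ⟨m', h1', h2', h3', hm'⟩ := mem_psl_iff.mp hz'
      have := getVert_injOn hp.1 h3' (by omega : i ≤ p.length) hm'
      omega
    · intro z hz hz'
      have hz := List.mem_reverse.mp hz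
      obtain ⟨m', h1', h2', h3', rfl⟩ := mem_psl_iff.mp hz
      rcases List.mem_append.mp hz' with hz' | hz'
      · simp only [List.mem_singleton] at hz'
        have := getVert_injOn hp.1 h3' (by omega : i ≤ p.length) hz'
        omega
      · obtain ⟨m'', h1'', h2'', h3'', hm''⟩ := mem_psl_iff.mp hz'
        have := getVert_injOn hp.1 h3'' h3' hm''
        omega
  have hRmem : ∀ z ∈ ((psl p (i+1) (a'-1)).reverse ++ ([p.getVert i] ++ psl p j n)),
      z ∈ p.support := by
    intro z hz
    rcases List.mem_append.mp hz with hz | hz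
    · obtain ⟨m', _, _, h3', rfl⟩ := mem_psl_iff.mp (List.mem_reverse.mp hz)
      exact getVert_mem_supp h3'
    rcases List.mem_append.mp hz with hz | hz
    · simp only [List.mem_singleton] at hz
      subst hz
      exact getVert_mem_supp (by omega)
    · obtain ⟨m', _, _, h3', rfl⟩ := mem_psl_iff.mp hz
      exact getVert_mem_supp h3'
  have hRlen : ((psl p (i+1) (a'-1)).reverse ++ ([p.getVert i] ++ psl p j n)).length
      = (a' - i - 1) + 1 + (n - j + 1) := by
    simp only [List.length_append, List.length_reverse, List.length_singleton]
    rw [psl_length (by omega : i+1 ≤ a'-1) (by omega), psl_length (by omega) (by omega)]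
    omega
  rcases Nat.eq_zero_or_pos a with ha0 | hapos
  · -- case a = 0
    subst ha0
    obtain ⟨l, hnd, hch, hmem, hlast, hlen⟩ := clique_list_end hcl hfin hv0
    set M : List V := l ++ ((psl p (i+1) (a'-1)).reverse ++ ([p.getVert i] ++ psl p j n))
      with hM
    have hchain : M.Chain' G.Adj := by
      refine chain'_glue hch hRchain hlast (head?_append_left ?_) hv0adj
      rw [List.head?_reverse, psl_getLast? (by omega : i+1 ≤ a'-1) (by omega)]
    have hnodup : M.Nodup := by
      rw [hM, List.nodup_append']
      refine ⟨hnd, hRnodup, ?_⟩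
      intro z hz hz'
      exact H_not_supp hH ((hmem z).mp hz) (hRmem z hz')
    have hle := length_le_of_longest hp M hchain hnodup
    rw [hM, List.length_append, hRlen, hlen] at hle
    omega
  · -- case a ≥ 1
    have hsS : p.getVert (a - 1) ∈ attachSet G p H := by
      rcases hlefti with h0 | h
      · omega
      · exact h
    obtain ⟨u0, hu0, hu0adj⟩ := hsS.2
    have hst : p.getVert (a-1) ≠ p.getVert (a'-1) := by
      intro h
      have := getVert_injOn hp.1 (by omega : a-1 ≤ p.length) (by omega : a'-1 ≤ p.length) h
      omega
    obtain ⟨l, hnd, hch, hmem, u, v, hheadl, hlastl, hus, hvt, hlen⟩ :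
        ∃ l : List V, l.Nodup ∧ l.Chain' G.Adj ∧ (∀ z, z ∈ l ↔ z ∈ H) ∧
          ∃ u v : V, l.head? = some u ∧ l.getLast? = some v ∧
            G.Adj u (p.getVert (a-1)) ∧ G.Adj v (p.getVert (a'-1)) ∧ l.length = H.ncard := by
      rcases Nat.lt_or_ge H.ncard 2 with h2 | h2
      · -- |H| = 1
        have h1 : H.ncard = 1 := by omega
        have hH0 : H = {u0} := by
          obtain ⟨w, hw⟩ := Set.ncard_eq_one.mp h1
          rw [hw] at hu0 ⊢
          rw [Set.mem_singleton_iff] at hu0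
          rw [hu0]
        have huv0 : u0 = v0 := by
          rw [hH0, Set.mem_singleton_iff] at hv0
          rw [hv0]
        refine ⟨[u0], by simp, List.isChain_singleton u0, by simp [hH0], u0, u0, rfl, rfl, hu0adj, ?_, by simp [h1]⟩
        rw [huv0]
        exact hv0adj
      · obtain ⟨u, v, hu, hv, huv, hus, hvt⟩ :=
          exists_distinct_nbrs hconn halpha hp hH hsS htS hst h2
        obtain ⟨l, hnd, hch, hmem, hhead, hlast, hlen⟩ := clique_list hcl hfin hu hv huv
        exact ⟨l, hnd, hch, hmem, u, v, hhead, hlast, hus, hvt, hlen⟩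
    set M : List V := psl p 0 (a-1) ++
      (l ++ ((psl p (i+1) (a'-1)).reverse ++ ([p.getVert i] ++ psl p j n))) with hM
    have hchain : M.Chain' G.Adj := by
      refine chain'_glue (psl_chain' p 0 (a-1)) ?_ (psl_getLast? (by omega) (by omega))
        (head?_append_left hheadl) hus.symm
      refine chain'_glue hch hRchain hlastl (head?_append_left ?_) hvt
      rw [List.head?_reverse, psl_getLast? (by omega : i+1 ≤ a'-1) (by omega)]
    have hnodup : M.Nodup := by
      rw [hM, List.nodup_append', List.nodup_append']
      refine ⟨psl_nodup hp.1 _ _, ⟨hnd, hRnodup, ?_⟩, ?_⟩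
      · intro z hz hz'
        exact H_not_supp hH ((hmem z).mp hz) (hRmem z hz')
      · intro z hz hz'
        obtain ⟨m', h1', h2', h3', rfl⟩ := mem_psl_iff.mp hz
        rcases List.mem_append.mp hz' with hz' | hz'
        · exact H_not_supp hH ((hmem _).mp hz') (getVert_mem_supp h3')
        rcases List.mem_append.mp hz' with hz' | hz'
        · obtain ⟨m'', h1'', h2'', h3'', hm''⟩ := mem_psl_iff.mp (List.mem_reverse.mp hz')
          have := getVert_injOn hp.1 h3'' h3' hm''
          omega
        rcases List.mem_append.mp hz' with hz' | hz'
        · simp only [List.mem_singleton] at hz'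
          have := getVert_injOn hp.1 (by omega : i ≤ p.length) h3' hz'.symm
          omega
        · obtain ⟨m'', h1'', h2'', h3'', hm''⟩ := mem_psl_iff.mp hz'
          have := getVert_injOn hp.1 h3'' h3' hm''
          omega
    have hle := length_le_of_longest hp M hchain hnodup
    rw [hM, List.length_append, List.length_append, hRlen, hlen,
      psl_length (by omega) (by omega)] at hle
    omega

end Part4
section Part5

variable [Fintype V] {G : SimpleGraph V} {k : ℕ} {x y : V} {p : G.Walk x y} {H : Set V}

lemma rank_zero {S : Set V} (h0 : p.getVert 0 ∉ S) : rankAt G p S 0 = 0 := by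
  obtain ⟨a, ha, hrk, -⟩ := rank_spec (S := S) h0
  omega

lemma rank_succ_attach {S : Set V} {m : ℕ} (hm : p.getVert m ∈ S)
    (hm1 : p.getVert (m+1) ∉ S) : rankAt G p S (m+1) = 0 := by
  obtain ⟨a, ha, hrk, hrun, -, -⟩ := rank_spec (S := S) hm1
  have : ¬ (a ≤ m) := fun hle => hrun m hle (by omega) hm
  omega

lemma indep_subset {A B : Set V} (hA : IsIndepSet G A) (hBA : B ⊆ A) : IsIndepSet G B :=
  hA.mono hBA

/-- Part (5): in a single gap, the vertices of rank `< |H|` form a clique. -/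
lemma rank_clique (hconn : IsKConnected k G)
    (halpha : ∀ A : Set V, IsIndepSet G A → A.ncard ≤ k + 2)
    (hp : IsLongestPath G p) (hH : IsCompOutside G {v | v ∈ p.support} H)
    {i j : ℕ} (hij : i < j) (hjn : j ≤ p.length)
    (hclean : ∀ m, i ≤ m → m ≤ j → p.getVert m ∉ attachSet G p H)
    (hri : rankAt G p (attachSet G p H) i < H.ncard)
    (hrj : rankAt G p (attachSet G p H) j < H.ncard) :
    G.Adj (p.getVert i) (p.getVert j) := by
  by_contra hnadj
  obtain ⟨h, hh⟩ := hH.1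
  set n := p.length with hn
  obtain ⟨a, hai, hrki, hruni, hlefti, hmini⟩ :=
    rank_spec (S := attachSet G p H) (hclean i le_rfl (by omega))
  obtain ⟨a₂, haj, hrkj, hrunj, hleftj, hminj⟩ :=
    rank_spec (S := attachSet G p H) (hclean j (by omega) le_rfl)
  -- the two indices lie in the same gap
  have hrunaj : ∀ m, a ≤ m → m ≤ j → p.getVert m ∉ attachSet G p H := by
    intro m h1 h2
    rcases Nat.le_total m i with h | h
    · exact hruni m h1 h
    · exact hclean m h h2
  have ha2a : a₂ = a := by
    have h1 : a₂ ≤ a := hminj a hrunaj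
    have h2 : a ≤ a₂ := hmini a₂ (fun m hm1 hm2 => hrunj m hm1 (by omega))
    omega
  rw [ha2a] at haj hrkj hrunj hleftj
  rw [hrki] at hri
  rw [hrkj] at hrj
  have hik : i ≤ n := by omega
  have hTcard : ({m | m ≤ p.length ∧ p.getVert m ∈ attachSet G p H}).ncard = k := by
    rw [ncard_attachIdx hp.1]
    exact attach_ncard hconn halpha hp hH
  have hinj := fun {i' j' : ℕ} => getVert_injOn (p := p) hp.1 (i := i') (j := j')
  -- basic non-adjacency of u_i, u_j with H
  have hiH : ∀ z ∈ H, ¬ G.Adj (p.getVert i) z :=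
    fun z hz hadj => hclean i le_rfl (by omega) ⟨getVert_mem_supp hik, z, hz, hadj.symm⟩
  have hjH : ∀ z ∈ H, ¬ G.Adj (p.getVert j) z :=
    fun z hz hadj => hclean j (by omega) le_rfl ⟨getVert_mem_supp hjn, z, hz, hadj.symm⟩
  rcases Nat.eq_zero_or_pos a with ha0 | hapos
  · -- a = 0 : use all successors
    subst ha0
    set SS := ((fun m => p.getVert (m + 1)) ''
      {m | m ≤ p.length ∧ p.getVert m ∈ attachSet G p H}) with hSS
    have hmgt : ∀ m ∈ {m | m ≤ p.length ∧ p.getVert m ∈ attachSet G p H}, j < m := by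
      intro m hm
      by_contra hle
      push_neg at hle
      exact hrunaj m (by omega) hle hm.2
    have hpair : ∀ m ∈ {m | m ≤ p.length ∧ p.getVert m ∈ attachSet G p H},
        ∀ i', i' ≤ j → p.getVert i' ∉ attachSet G p H → rankAt G p (attachSet G p H) i' < H.ncard →
        ¬ G.Adj (p.getVert i') (p.getVert (m+1)) := by
      intro m hm i' hi'j hi'S hi'r
      have hmn : m < n := attachIdx_lt hp hH hm
      have hjm := hmgt m hm
      refine rank_nonadj hconn halpha hp hH (by omega : i' < m + 1) (by omega) hi'S
        (succ_not_attach hp hH hmn hm.2) ⟨m, by omega, by omega, hm.2⟩ ?_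
      rw [rank_succ_attach hm.2 (succ_not_attach hp hH hmn hm.2)]
      omega
    have hind : IsIndepSet G (insert (p.getVert i) (insert (p.getVert j) (insert h SS))) := by
      refine indep_insert (indep_insert (indep_insert (succ_indep hp hH)
        (H_not_adj_succ hp hH hh)) ?_) ?_
      · intro z hz
        rcases Set.mem_insert_iff.mp hz with rfl | hz
        · exact fun hadj => hjH z hh hadj
        · obtain ⟨m, hm, rfl⟩ := hz
          exact hpair m hm j le_rfl (hclean j (by omega) le_rfl) (by rw [hrkj]; omega)
      · intro z hz
        rcases Set.mem_insert_iff.mp hz with rfl | hz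
        · exact hnadj
        rcases Set.mem_insert_iff.mp hz with rfl | hz
        · exact fun hadj => hiH z hh hadj
        · obtain ⟨m, hm, rfl⟩ := hz
          exact hpair m hm i (by omega) (hclean i le_rfl (by omega)) (by rw [hrki]; omega)
    have hcard := halpha _ hind
    have hnm1 : h ∉ SS := H_notmem_succ hH hh
    have hnm2 : p.getVert j ∉ insert h SS := by
      rintro (rfl | ⟨m, hm, heq⟩)
      · exact H_not_supp hH hh (getVert_mem_supp hjn)
      · have hmn : m < n := attachIdx_lt hp hH hm
        have := hinj (by omega : m + 1 ≤ p.length) hjn heq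
        have := hmgt m hm
        omega
    have hnm3 : p.getVert i ∉ insert (p.getVert j) (insert h SS) := by
      rintro (heq | rfl | ⟨m, hm, heq⟩)
      · exact absurd (hinj hjn hik heq.symm) (by omega)
      · exact H_not_supp hH hh (getVert_mem_supp hik)
      · have hmn : m < n := attachIdx_lt hp hH hm
        have := hinj (by omega : m + 1 ≤ p.length) hik heq
        have := hmgt m hm
        omega
    rw [Set.ncard_insert_of_notMem hnm3, Set.ncard_insert_of_notMem hnm2,
      Set.ncard_insert_of_notMem hnm1, ncard_succ_set hp hH, hTcard] at hcard
    omega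
  · -- a ≥ 1
    have hsS : p.getVert (a-1) ∈ attachSet G p H := by
      rcases hlefti with h0 | hmem
      · omega
      · exact hmem
    have ha2 : 2 ≤ a := by
      rcases Nat.lt_or_ge a 2 with h2 | h2
      · exfalso
        have : a = 1 := by omega
        rw [this] at hsS
        exact start_not_attach hp hH hsS
      · exact h2
    set T' := {m | m ≤ p.length ∧ p.getVert m ∈ attachSet G p H} \ {a - 1} with hT'
    set SS := ((fun m => p.getVert (m + 1)) '' T') with hSS
    have hT'facts : ∀ m ∈ T', (m + 1 < a - 1) ∨ (j < m) := by
      rintro m ⟨hm, hma⟩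
      rw [Set.mem_singleton_iff] at hma
      have h1 : ¬ (a ≤ m ∧ m ≤ j) := fun ⟨h1, h2⟩ => hrunaj m h1 h2 hm.2
      rcases Nat.lt_or_ge j m with h | h
      · exact Or.inr h
      · left
        have hmlt : m < a := by omega
        have hne : m + 1 ≠ a - 1 := by
          intro heq
          exact succ_not_attach hp hH (attachIdx_lt hp hH hm) hm.2 (heq ▸ hsS)
        omega
    have hpair : ∀ m ∈ T',
        ∀ i', a ≤ i' → i' ≤ j → rankAt G p (attachSet G p H) i' < H.ncard →
        ¬ G.Adj (p.getVert i') (p.getVert (m+1)) := by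
      intro m hm i' hai' hi'j hi'r
      have hmn : m < n := attachIdx_lt hp hH hm.1
      have hi'S := hrunaj i' hai' hi'j
      rcases hT'facts m hm with hcase | hcase
      · intro hadj
        refine rank_nonadj hconn halpha hp hH (by omega : m + 1 < i') (by omega)
          (succ_not_attach hp hH hmn hm.1.2) hi'S ⟨a - 1, by omega, by omega, hsS⟩ ?_ hadj.symm
        rw [rank_succ_attach hm.1.2 (succ_not_attach hp hH hmn hm.1.2)]
        omega
      · refine rank_nonadj hconn halpha hp hH (by omega : i' < m + 1) (by omega) hi'S
          (succ_not_attach hp hH hmn hm.1.2) ⟨m, by omega, by omega, hm.1.2⟩ ?_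
        rw [rank_succ_attach hm.1.2 (succ_not_attach hp hH hmn hm.1.2)]
        omega
    have h0pair : ∀ i', a ≤ i' → i' ≤ j → rankAt G p (attachSet G p H) i' < H.ncard →
        ¬ G.Adj (p.getVert 0) (p.getVert i') := by
      intro i' hai' hi'j hi'r
      exact rank_nonadj hconn halpha hp hH (by omega : 0 < i') (by omega)
        (start_not_attach hp hH) (hrunaj i' hai' hi'j) ⟨a - 1, by omega, by omega, hsS⟩
        (by rw [rank_zero (start_not_attach hp hH)]; omega)
    have hind : IsIndepSet G (insert (p.getVert i) (insert (p.getVert j)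
        (insert h (insert (p.getVert 0) SS)))) := by
      refine indep_insert (indep_insert (indep_insert (indep_insert
        (indep_subset (succ_indep hp hH) (Set.image_mono Set.diff_subset)) ?_) ?_) ?_) ?_
      · -- x vs SS
        intro z hz
        obtain ⟨m, hm, rfl⟩ := hz
        exact start_indep_succ hp hH _ ⟨m, hm.1, rfl⟩
      · -- h vs x, SS
        intro z hz
        rcases Set.mem_insert_iff.mp hz with rfl | hz
        · exact start_not_adj_H hp hH hh
        · obtain ⟨m, hm, rfl⟩ := hz
          exact H_not_adj_succ hp hH hh _ ⟨m, hm.1, rfl⟩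
      · -- u_j vs h, x, SS
        intro z hz
        rcases Set.mem_insert_iff.mp hz with rfl | hz
        · exact fun hadj => hjH z hh hadj
        rcases Set.mem_insert_iff.mp hz with rfl | hz
        · exact fun hadj => h0pair j (by omega) le_rfl (by rw [hrkj]; omega) hadj.symm
        · obtain ⟨m, hm, rfl⟩ := hz
          exact hpair m hm j (by omega) le_rfl (by rw [hrkj]; omega)
      · -- u_i vs u_j, h, x, SS
        intro z hz
        rcases Set.mem_insert_iff.mp hz with rfl | hz
        · exact hnadj
        rcases Set.mem_insert_iff.mp hz with rfl | hz
        · exact fun hadj => hiH z hh hadj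
        rcases Set.mem_insert_iff.mp hz with rfl | hz
        · exact fun hadj => h0pair i hai (by omega) (by rw [hrki]; omega) hadj.symm
        · obtain ⟨m, hm, rfl⟩ := hz
          exact hpair m hm i hai (by omega) (by rw [hrki]; omega)
    have hcard := halpha _ hind
    -- cardinalities
    have hSSmem : ∀ z ∈ SS, ∃ m, m ∈ T' ∧ z = p.getVert (m+1) := by
      rintro z ⟨m, hm, rfl⟩
      exact ⟨m, hm, rfl⟩
    have hnm0 : p.getVert 0 ∉ SS := by
      rintro ⟨m, hm, heq⟩
      have hmn : m < n := attachIdx_lt hp hH hm.1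
      have := hinj (by omega : m + 1 ≤ p.length) (by omega : 0 ≤ p.length) heq
      omega
    have hnm1 : h ∉ insert (p.getVert 0) SS := by
      rintro (rfl | ⟨m, hm, heq⟩)
      · exact H_not_supp hH hh (getVert_mem_supp (by omega))
      · have hmn : m < n := attachIdx_lt hp hH hm.1
        exact H_not_supp hH hh (heq ▸ getVert_mem_supp (by omega : m + 1 ≤ p.length))
    have hnm2 : p.getVert j ∉ insert h (insert (p.getVert 0) SS) := by
      rintro (rfl | heq | ⟨m, hm, heq⟩)
      · exact H_not_supp hH hh (getVert_mem_supp hjn)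
      · have := hinj (by omega : (0:ℕ) ≤ p.length) hjn heq.symm
        omega
      · have hmn : m < n := attachIdx_lt hp hH hm.1
        have := hinj (by omega : m + 1 ≤ p.length) hjn heq
        rcases hT'facts m hm with hc | hc <;> omega
    have hnm3 : p.getVert i ∉ insert (p.getVert j) (insert h (insert (p.getVert 0) SS)) := by
      rintro (heq | rfl | heq | ⟨m, hm, heq⟩)
      · exact absurd (hinj hjn hik heq.symm) (by omega)
      · exact H_not_supp hH hh (getVert_mem_supp hik)
      · have := hinj (by omega : (0:ℕ) ≤ p.length) hik heq.symm
        omega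
      · have hmn : m < n := attachIdx_lt hp hH hm.1
        have := hinj (by omega : m + 1 ≤ p.length) hik heq
        rcases hT'facts m hm with hc | hc <;> omega
    have hmemT : (a-1) ∈ {m | m ≤ p.length ∧ p.getVert m ∈ attachSet G p H} :=
      ⟨by omega, hsS⟩
    have hSScard : SS.ncard = k - 1 := by
      rw [hSS, Set.ncard_image_of_injOn, hT',
        Set.ncard_diff_singleton_of_mem hmemT, hTcard]
      intro m₁ hm₁ m₂ hm₂ heq
      have h1 : m₁ < n := attachIdx_lt hp hH hm₁.1
      have h2 : m₂ < n := attachIdx_lt hp hH hm₂.1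
      have := hinj (by omega : m₁ + 1 ≤ p.length) (by omega : m₂ + 1 ≤ p.length) heq
      omega
    have hkge : 1 ≤ k := by
      have hpos : 0 < ({m | m ≤ p.length ∧ p.getVert m ∈ attachSet G p H}).ncard := by
        rw [Set.ncard_pos attachIdx_finite]
        exact ⟨a-1, hmemT⟩
      omega
    rw [Set.ncard_insert_of_notMem hnm3, Set.ncard_insert_of_notMem hnm2,
      Set.ncard_insert_of_notMem hnm1, Set.ncard_insert_of_notMem hnm0, hSScard] at hcard
    omega

end Part5
section Count

variable [Fintype V] {G : SimpleGraph V} {k : ℕ} {x y : V} {p : G.Walk x y} {H : Set V}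

lemma A_spec {S : Set V} {j : ℕ} (hj : p.getVert j ∉ S) :
    sInf {a | ∀ i, a ≤ i → i ≤ j → p.getVert i ∉ S} ≤ j ∧
      (∀ i, sInf {a | ∀ i, a ≤ i → i ≤ j → p.getVert i ∉ S} ≤ i → i ≤ j → p.getVert i ∉ S) ∧
      (sInf {a | ∀ i, a ≤ i → i ≤ j → p.getVert i ∉ S} = 0 ∨
        p.getVert (sInf {a | ∀ i, a ≤ i → i ≤ j → p.getVert i ∉ S} - 1) ∈ S) ∧
      ∀ a', (∀ i, a' ≤ i → i ≤ j → p.getVert i ∉ S) →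
        sInf {a | ∀ i, a ≤ i → i ≤ j → p.getVert i ∉ S} ≤ a' := by
  set AS : Set ℕ := {a | ∀ i, a ≤ i → i ≤ j → p.getVert i ∉ S} with hAS
  have hjAS : j ∈ AS := by
    intro i h1 h2
    have : i = j := by omega
    subst this
    exact hj
  have haAS : sInf AS ∈ AS := Nat.sInf_mem ⟨j, hjAS⟩
  have haj : sInf AS ≤ j := Nat.sInf_le hjAS
  refine ⟨haj, haAS, ?_, fun a' h' => Nat.sInf_le h'⟩
  rcases Nat.eq_zero_or_pos (sInf AS) with h0 | hpos
  · exact Or.inl h0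
  · right
    by_contra hnot
    have hmem : sInf AS - 1 ∈ AS := by
      intro i h1 h2
      rcases Nat.lt_or_ge i (sInf AS) with h | h
      · have : i = sInf AS - 1 := by omega
        subst this
        exact hnot
      · exact haAS i h h2
    have := Nat.sInf_le hmem
    omega

/-- Part (3a): there are exactly `k + 1` gap intervals. -/
lemma gap_count (hconn : IsKConnected k G)
    (halpha : ∀ A : Set V, IsIndepSet G A → A.ncard ≤ k + 2)
    (hp : IsLongestPath G p) (hH : IsCompOutside G {v | v ∈ p.support} H) :
    ({ab : ℕ × ℕ | IsGapInterval G p (attachSet G p H) ab.1 ab.2}).ncard = k + 1 := by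
  classical
  set n := p.length with hn
  set S := attachSet G p H with hS
  set T := {m | m ≤ n ∧ p.getVert m ∈ S} with hT
  set B := {b | b ≤ n ∧ p.getVert b ∉ S ∧ (b = n ∨ p.getVert (b+1) ∈ S)} with hB
  have hBfin : B.Finite := (Set.finite_Iic n).subset fun b hb => hb.1
  have hTfin : T.Finite := (Set.finite_Iic n).subset fun b hb => hb.1
  have hyS : p.getVert n ∉ S := end_not_attach hp hH
  have hxS : p.getVert 0 ∉ S := start_not_attach hp hH
  -- Step 1 : the gap set is the image of B
  have hgapeq : {ab : ℕ × ℕ | IsGapInterval G p S ab.1 ab.2} =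
      (fun b => (sInf {a' | ∀ i, a' ≤ i → i ≤ b → p.getVert i ∉ S}, b)) '' B := by
    apply Set.eq_of_subset_of_subset
    · rintro ⟨a, b⟩ hab
      obtain ⟨h1, h2, h3, h4, h5⟩ := hab
      have hbB : b ∈ B := ⟨h2, h3 b h1 le_rfl, h5⟩
      refine ⟨b, hbB, ?_⟩
      obtain ⟨hAle, hArun, hAleft, hAmin⟩ := A_spec (S := S) (j := b) (h3 b h1 le_rfl)
      have hle1 : sInf {a' | ∀ i, a' ≤ i → i ≤ b → p.getVert i ∉ S} ≤ a := hAmin a h3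
      have hle2 : a ≤ sInf {a' | ∀ i, a' ≤ i → i ≤ b → p.getVert i ∉ S} := by
        by_contra hlt
        push_neg at hlt
        rcases h4 with h0 | hmem
        · omega
        · exact hArun (a-1) (by omega) (by omega) hmem
      have heq : sInf {a' | ∀ i, a' ≤ i → i ≤ b → p.getVert i ∉ S} = a := by omega
      simp only [heq]
    · rintro z ⟨b, hb, rfl⟩
      obtain ⟨hbn, hbS, hbr⟩ := hb
      obtain ⟨hAle, hArun, hAleft, hAmin⟩ := A_spec (S := S) (j := b) hbS
      exact ⟨hAle, hbn, hArun, hAleft, hbr⟩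
  rw [hgapeq, Set.ncard_image_of_injOn (fun b₁ _ b₂ _ heq => congrArg Prod.snd heq)]
  -- Step 2 : shifting B by one gives T together with n+1
  have himg : (fun b => b + 1) '' B = insert (n+1) T := by
    apply Set.eq_of_subset_of_subset
    · rintro z ⟨b, ⟨hbn, hbS, hbr⟩, rfl⟩
      rcases hbr with rfl | hmem
      · exact Or.inl rfl
      · right
        have hblt : b < n := by
          rcases Nat.lt_or_ge b n with h | h
          · exact h
          · exfalso
            have hbe : b = n := by omega
            subst hbe
            rw [Walk.getVert_of_length_le p (by omega)] at hmem
            refine end_not_attach hp hH ?_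
            rw [Walk.getVert_length]
            exact hmem
        exact ⟨by show b + 1 ≤ n; omega, hmem⟩
    · rintro z (rfl | hzT)
      · exact ⟨n, ⟨le_rfl, hyS, Or.inl rfl⟩, rfl⟩
      · obtain ⟨hzn, hzS⟩ := hzT
        have hzpos : 0 < z := by
          rcases Nat.eq_zero_or_pos z with h0 | h
          · exact absurd (h0 ▸ hzS) hxS
          · exact h
        have hzlt : z < n := by
          rcases Nat.lt_or_ge z n with h | h
          · exact h
          · exfalso
            have : z = n := by omega
            exact hyS (this ▸ hzS)
        refine ⟨z - 1, ⟨by omega, ?_, Or.inr ?_⟩, by show z - 1 + 1 = z; omega⟩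
        · intro hmem
          exact no_consec_attach hp hH (by omega : z - 1 < p.length) hmem
            (by rwa [show z - 1 + 1 = z by omega])
        · rwa [show z - 1 + 1 = z by omega]
  have hBcard : B.ncard = T.ncard + 1 := by
    have h1 : ((fun b => b + 1) '' B).ncard = B.ncard :=
      Set.ncard_image_of_injOn (fun a _ b _ h => by omega)
    rw [himg] at h1
    rw [← h1, Set.ncard_insert_of_notMem (fun hmem => by
      have := hmem.1
      omega) hTfin]
  have hTcard : T.ncard = k := by
    have := ncard_attachIdx (p := p) (H := H) hp.1
    rw [hT, hS, hn]
    rw [this]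
    exact attach_ncard hconn halpha hp hH
  omega

end Count
/-- structure of a component `H` of `G - V(p)` for a longest path `p` in a
`k`-connected graph `G` with `α(G) ≤ k + 2`: (1) `H` has exactly `k` attachment points;
(2) `H` is complete; (3) `P - S` has exactly `k + 1` components, each with at least `|V(H)|`
vertices; (4) vertices in distinct components of `P - S` with rank sum `< |V(H)|` are
non-adjacent; (5) the vertices of rank `< |V(H)|` in a component of `P - S` form a clique. -/
theorem stmt10 [Fintype V] (G : SimpleGraph V) (k : ℕ) (hconn : IsKConnected k G)
    (halpha : ∀ A : Set V, IsIndepSet G A → A.ncard ≤ k + 2)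
    {x y : V} (p : G.Walk x y) (hp : IsLongestPath G p)
    (H : Set V) (hH : IsCompOutside G {v | v ∈ p.support} H) :
    (attachSet G p H).ncard = k ∧
    G.IsClique H ∧
    ({ab : ℕ × ℕ | IsGapInterval G p (attachSet G p H) ab.1 ab.2}.ncard = k + 1 ∧
      ∀ a b : ℕ, IsGapInterval G p (attachSet G p H) a b → H.ncard ≤ b - a + 1) ∧
    (∀ i j : ℕ, i < j → j ≤ p.length →
      p.getVert i ∉ attachSet G p H → p.getVert j ∉ attachSet G p H →
      (∃ m, i < m ∧ m < j ∧ p.getVert m ∈ attachSet G p H) →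
      rankAt G p (attachSet G p H) i + rankAt G p (attachSet G p H) j < H.ncard →
      ¬ G.Adj (p.getVert i) (p.getVert j)) ∧
    (∀ i j : ℕ, i < j → j ≤ p.length →
      (∀ m, i ≤ m → m ≤ j → p.getVert m ∉ attachSet G p H) →
      rankAt G p (attachSet G p H) i < H.ncard →
      rankAt G p (attachSet G p H) j < H.ncard →
      G.Adj (p.getVert i) (p.getVert j)) := by
  exact ⟨attach_ncard hconn halpha hp hH, H_clique hconn halpha hp hH,
    ⟨gap_count hconn halpha hp hH, fun a b hgap => gap_size hconn halpha hp hH hgap⟩,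
    fun i j hij hjn hiS hjS hbet hrank =>
      rank_nonadj hconn halpha hp hH hij hjn hiS hjS hbet hrank,
    fun i j hij hjn hclean hri hrj =>
      rank_clique hconn halpha hp hH hij hjn hclean hri hrj⟩

end GallaiFormal
end

section
/- Every connected graph with independence number at most 3 has a Gallai vertex; equivalently, the graph 4P_1 (four isolated vertices) is a fixer. -/
open SimpleGraph

namespace GallaiFormal

variable {V : Type}

section Infra

variable {G : SimpleGraph V}

lemma getVert_mem_support {u v : V} (p : G.Walk u v) {n : ℕ} (hn : n ≤ p.length) :
    p.getVert n ∈ p.support :=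
  Walk.mem_support_iff_exists_getVert.2 ⟨n, rfl, hn⟩

lemma getVert_inj {u v : V} {p : G.Walk u v} (hp : p.IsPath) :
    ∀ {i j : ℕ}, i ≤ p.length → j ≤ p.length → p.getVert i = p.getVert j → i = j := by
  induction p with
  | nil => intro i j hi hj _; simp at hi hj; omega
  | @cons a c b h q ih =>
      intro i j hi hj hij
      have hq : q.IsPath := hp.of_cons
      have ha : a ∉ q.support := by
        have := hp.support_nodup
        simp [Walk.support_cons] at this
        exact this.1
      match i, j with
      | 0, 0 => rfl
      | 0, j+1 =>
          exfalso
          apply ha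
          have : q.getVert j = a := by simpa [Walk.getVert_zero, Walk.getVert_cons_succ] using hij.symm
          exact this ▸ getVert_mem_support q (by simpa [Walk.length_cons] using hj)
      | i+1, 0 =>
          exfalso
          apply ha
          have : q.getVert i = a := by simpa [Walk.getVert_zero, Walk.getVert_cons_succ] using hij
          exact this ▸ getVert_mem_support q (by simpa [Walk.length_cons] using hi)
      | i+1, j+1 =>
          have := ih hq (by simpa [Walk.length_cons] using hi) (by simpa [Walk.length_cons] using hj)
            (by simpa [Walk.getVert_cons_succ] using hij)
          omega

lemma exists_walk_of_chain_s13 (a : V) (l : List V) (h : List.Chain G.Adj a l) :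
    ∃ (b : V) (q : G.Walk a b), q.support = a :: l := by
  induction l generalizing a with
  | nil => exact ⟨a, .nil, rfl⟩
  | cons c l ih =>
      obtain ⟨hac, hcl⟩ := List.chain_cons.1 h
      obtain ⟨b, q, hq⟩ := ih c hcl
      exact ⟨b, .cons hac q, by simp [Walk.support_cons, hq]⟩

lemma exists_path_of_list (l : List V) (hne : l ≠ []) (hc : l.Chain' G.Adj) (hn : l.Nodup) :
    ∃ (a b : V) (q : G.Walk a b), q.IsPath ∧ q.length + 1 = l.length := by
  obtain ⟨a, l, rfl⟩ := List.exists_cons_of_ne_nil hne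
  obtain ⟨b, q, hq⟩ := exists_walk_of_chain_s13 a l hc
  refine ⟨a, b, q, ?_, ?_⟩
  · rw [Walk.isPath_def, hq]; exact hn
  · have := q.length_support
    rw [hq] at this
    simpa using this.symm

/-- key length-contradiction tool -/
lemma no_long_list {x y : V} {p : G.Walk x y}
    (hmax : ∀ ⦃c d : V⦄ (q : G.Walk c d), q.IsPath → q.length ≤ p.length)
    (l : List V) (hc : l.Chain' G.Adj) (hn : l.Nodup) (hl : p.length + 2 ≤ l.length) : False := by
  have hne : l ≠ [] := by rintro rfl; simp at hl
  obtain ⟨a, b, q, hq, hql⟩ := exists_path_of_list l hne hc hn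
  have := hmax q hq
  omega





/-- ascending segment of a walk: vertices at positions `i, i+1, ..., i+k-1`. -/
def ascL {x y : V} (p : G.Walk x y) (i k : ℕ) : List V :=
  (List.range' i k).map p.getVert

/-- descending segment: positions `i+k-1, ..., i`. -/
def descL {x y : V} (p : G.Walk x y) (i k : ℕ) : List V :=
  (ascL p i k).reverse

variable {x y : V} {p : G.Walk x y}

@[simp] lemma length_ascL (i k : ℕ) : (ascL p i k).length = k := by
  simp [ascL]

@[simp] lemma length_descL (i k : ℕ) : (descL p i k).length = k := by
  simp [descL]

lemma mem_ascL_iff {z : V} {i k : ℕ} :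
    z ∈ ascL p i k ↔ ∃ t, i ≤ t ∧ t < i + k ∧ p.getVert t = z := by
  simp only [ascL, List.mem_map, List.mem_range'_1]
  constructor
  · rintro ⟨t, ⟨h1, h2⟩, rfl⟩; exact ⟨t, h1, h2, rfl⟩
  · rintro ⟨t, h1, h2, rfl⟩; exact ⟨t, ⟨h1, h2⟩, rfl⟩

lemma mem_descL_iff {z : V} {i k : ℕ} :
    z ∈ descL p i k ↔ ∃ t, i ≤ t ∧ t < i + k ∧ p.getVert t = z := by
  rw [descL, List.mem_reverse]; exact mem_ascL_iff

lemma ascL_subset_support {i k : ℕ} (h : i + k ≤ p.length + 1) {z : V} (hz : z ∈ ascL p i k) :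
    z ∈ p.support := by
  obtain ⟨t, h1, h2, rfl⟩ := mem_ascL_iff.1 hz
  exact getVert_mem_support p (by omega)

lemma descL_subset_support {i k : ℕ} (h : i + k ≤ p.length + 1) {z : V} (hz : z ∈ descL p i k) :
    z ∈ p.support := ascL_subset_support h (by rwa [descL, List.mem_reverse] at hz)

lemma nodup_ascL (hp : p.IsPath) {i k : ℕ} (h : i + k ≤ p.length + 1) :
    (ascL p i k).Nodup := by
  refine List.Nodup.map_on ?_ (List.nodup_range' (s := i) (n := k))
  intro s hs t ht hst
  rw [List.mem_range'_1] at hs ht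
  exact getVert_inj hp (by omega) (by omega) hst

lemma nodup_descL (hp : p.IsPath) {i k : ℕ} (h : i + k ≤ p.length + 1) :
    (descL p i k).Nodup := by
  rw [descL, List.nodup_reverse]; exact nodup_ascL hp h

lemma disjoint_ascL_ascL (hp : p.IsPath) {i k j m : ℕ}
    (hik : i + k ≤ p.length + 1) (hjm : j + m ≤ p.length + 1) (hd : i + k ≤ j ∨ j + m ≤ i) :
    ∀ {z : V}, z ∈ ascL p i k → z ∈ ascL p j m → False := by
  intro z h1 h2
  obtain ⟨t, ht1, ht2, rfl⟩ := mem_ascL_iff.1 h1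
  obtain ⟨s, hs1, hs2, hst⟩ := mem_ascL_iff.1 h2
  have := getVert_inj hp (by omega) (by omega) hst
  omega

lemma chain'_ascL (i k : ℕ) (h : i + k ≤ p.length + 1) :
    (ascL p i k).Chain' G.Adj := by
  rw [ascL, show @List.Chain' V = List.IsChain from rfl, List.isChain_map]
  induction k generalizing i with
  | zero => simp
  | succ k ih =>
      rw [List.range'_succ]
      rcases Nat.eq_zero_or_pos k with rfl | hk
      · simp
      · rw [List.isChain_cons]
        refine ⟨?_, ih (i+1) (by omega)⟩
        intro b hb
        obtain ⟨k, rfl⟩ := Nat.exists_eq_succ_of_ne_zero (Nat.pos_iff_ne_zero.1 hk)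
        rw [List.range'_succ] at hb
        simp only [List.head?_cons, Option.mem_some_iff] at hb
        subst hb
        exact p.adj_getVert_succ (by omega)

lemma chain'_descL (i k : ℕ) (h : i + k ≤ p.length + 1) :
    (descL p i k).Chain' G.Adj := by
  rw [descL, show @List.Chain' V = List.IsChain from rfl, List.isChain_reverse]
  have := chain'_ascL (p := p) i k h
  apply List.IsChain.imp _ this
  intro a b hab
  exact hab.symm

lemma head?_ascL (i : ℕ) {k : ℕ} (hk : k ≠ 0) : (ascL p i k).head? = some (p.getVert i) := by
  obtain ⟨k, rfl⟩ := Nat.exists_eq_succ_of_ne_zero hk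
  rw [ascL, List.range'_succ]
  simp

lemma getLast?_ascL (i : ℕ) {k : ℕ} (hk : k ≠ 0) :
    (ascL p i k).getLast? = some (p.getVert (i + k - 1)) := by
  obtain ⟨k, rfl⟩ := Nat.exists_eq_succ_of_ne_zero hk
  rw [ascL, List.range'_concat]
  simp only [List.map_append, List.map_cons, List.map_nil, List.getLast?_concat]
  congr 2
  omega

lemma head?_descL (i : ℕ) {k : ℕ} (hk : k ≠ 0) :
    (descL p i k).head? = some (p.getVert (i + k - 1)) := by
  rw [descL, ← List.getLast?_reverse, List.reverse_reverse]
  exact getLast?_ascL i hk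

lemma getLast?_descL (i : ℕ) {k : ℕ} (hk : k ≠ 0) :
    (descL p i k).getLast? = some (p.getVert i) := by
  rw [descL, List.getLast?_reverse]
  exact head?_ascL i hk

lemma ascL_ne_nil (i : ℕ) {k : ℕ} (hk : k ≠ 0) : ascL p i k ≠ [] := by
  intro h
  have := length_ascL (p := p) i k
  rw [h] at this
  simp at this
  omega

lemma descL_ne_nil (i : ℕ) {k : ℕ} (hk : k ≠ 0) : descL p i k ≠ [] := by
  intro h
  have := length_descL (p := p) i k
  rw [h] at this
  simp at this
  omega


end Infra

section Surgery

variable {G : SimpleGraph V} {x y : V} {p : G.Walk x y}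

/-- head? of an append with nonempty left part -/
lemma head?_append' (l1 l2 : List V) (h : l1 ≠ []) : (l1 ++ l2).head? = l1.head? := by
  cases l1 with
  | nil => exact absurd rfl h
  | cons a t => simp

lemma getLast?_append' (l1 l2 : List V) (h : l2 ≠ []) : (l1 ++ l2).getLast? = l2.getLast? := by
  rw [List.getLast?_append]
  cases l2 with
  | nil => exact absurd rfl h
  | cons a t =>
      have : (a :: t).getLast? = some ((a :: t).getLast (by simp)) := List.getLast?_eq_getLast _
      rw [this]
      simp [Option.or]

/-- An endpoint of a longest path has all its neighbours on the path. -/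
lemma adj_start_mem_support (hp : p.IsPath)
    (hmax : ∀ ⦃c d : V⦄ (q : G.Walk c d), q.IsPath → q.length ≤ p.length)
    {u : V} (h : G.Adj u x) : u ∈ p.support := by
  by_contra hu
  have hq : (Walk.cons h p).IsPath := hp.cons hu
  have := hmax _ hq
  simp [Walk.length_cons] at this

lemma adj_end_mem_support (hp : p.IsPath)
    (hmax : ∀ ⦃c d : V⦄ (q : G.Walk c d), q.IsPath → q.length ≤ p.length)
    {u : V} (h : G.Adj u y) : u ∈ p.support := by
  have := adj_start_mem_support (p := p.reverse) hp.reverse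
    (by intro c d q hq; rw [Walk.length_reverse]; exact hmax q hq) (u := u) h
  rwa [Walk.support_reverse, List.mem_reverse] at this

/-- SL2 : endpoints of a longest path with a vertex off it are non-adjacent. -/
lemma not_adj_ends (hp : p.IsPath)
    (hmax : ∀ ⦃c d : V⦄ (q : G.Walk c d), q.IsPath → q.length ≤ p.length)
    {u : V} (hu : u ∉ p.support) {s : ℕ} (hs : s ≤ p.length)
    (hadj : G.Adj u (p.getVert s)) (hxy : G.Adj x y) : False := by
  set L := p.length with hL
  rcases Nat.eq_zero_or_pos s with rfl | hs0
  · rw [p.getVert_zero] at hadj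
    exact hu (adj_start_mem_support hp hmax hadj)
  rcases eq_or_lt_of_le hs with rfl | hsL
  · rw [p.getVert_length] at hadj
    exact hu (adj_end_mem_support hp hmax hadj)
  -- 1 ≤ s ≤ L-1
  have hL1 : 1 ≤ L := by omega
  set l : List V := u :: (descL p 0 (s+1) ++ descL p (s+1) (L-s)) with hl
  have hb1 : (0:ℕ) + (s+1) ≤ L + 1 := by omega
  have hb2 : (s+1) + (L-s) ≤ L + 1 := by omega
  have hne1 : descL p 0 (s+1) ≠ [] := descL_ne_nil _ (by omega)
  have hne2 : descL p (s+1) (L-s) ≠ [] := descL_ne_nil _ (by omega)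
  refine no_long_list hmax l ?_ ?_ ?_
  · rw [hl, show @List.Chain' V = List.IsChain from rfl, List.isChain_cons]
    constructor
    · intro z hz
      rw [head?_append' _ _ hne1, head?_descL _ (by omega)] at hz
      simp only [Option.mem_some_iff] at hz
      subst hz
      have : 0 + (s+1) - 1 = s := by omega
      rwa [this]
    · refine List.IsChain.append (chain'_descL _ _ hb1) (chain'_descL _ _ hb2) ?_
      intro a ha b hb
      rw [getLast?_descL _ (by omega)] at ha
      rw [head?_descL _ (by omega)] at hb
      simp only [Option.mem_some_iff] at ha hb
      subst ha; subst hb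
      have h1 : p.getVert 0 = x := p.getVert_zero
      have h2 : (s+1) + (L-s) - 1 = L := by omega
      rw [h1, h2, hL, p.getVert_length]
      exact hxy
  · rw [hl]
    refine List.nodup_cons.2 ⟨?_, ?_⟩
    · intro hmem
      rcases List.mem_append.1 hmem with h | h
      · exact hu (descL_subset_support hb1 h)
      · exact hu (descL_subset_support hb2 h)
    · refine List.Nodup.append (nodup_descL hp hb1) (nodup_descL hp hb2) ?_
      intro z h1 h2
      obtain ⟨t1, ha1, ha2, rfl⟩ := mem_descL_iff.1 h1
      obtain ⟨t2, hb1', hb2', heq⟩ := mem_descL_iff.1 h2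
      have := getVert_inj hp (i := t2) (j := t1) (by omega) (by omega) heq
      omega
  · rw [hl]
    simp only [List.length_cons, List.length_append, length_descL]
    omega

/-- SL3 : if `u` is off a longest path, `u ~ v_t` and `x ~ v_{t+1}` is impossible. -/
lemma no_crossover_start (hp : p.IsPath)
    (hmax : ∀ ⦃c d : V⦄ (q : G.Walk c d), q.IsPath → q.length ≤ p.length)
    {u : V} (hu : u ∉ p.support) {t : ℕ} (ht : t < p.length)
    (h1 : G.Adj u (p.getVert t)) (h2 : G.Adj x (p.getVert (t+1))) : False := by
  set L := p.length with hL
  set l : List V := u :: (descL p 0 (t+1) ++ ascL p (t+1) (L-t)) with hl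
  have hb1 : (0:ℕ) + (t+1) ≤ L + 1 := by omega
  have hb2 : (t+1) + (L-t) ≤ L + 1 := by omega
  have hne1 : descL p 0 (t+1) ≠ [] := descL_ne_nil _ (by omega)
  refine no_long_list hmax l ?_ ?_ ?_
  · rw [hl, show @List.Chain' V = List.IsChain from rfl, List.isChain_cons]
    constructor
    · intro z hz
      rw [head?_append' _ _ hne1, head?_descL _ (by omega)] at hz
      simp only [Option.mem_some_iff] at hz
      subst hz
      have : 0 + (t+1) - 1 = t := by omega
      rwa [this]
    · refine List.IsChain.append (chain'_descL _ _ hb1) (chain'_ascL _ _ hb2) ?_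
      intro a ha b hb
      rw [getLast?_descL _ (by omega)] at ha
      rw [head?_ascL _ (by omega)] at hb
      simp only [Option.mem_some_iff] at ha hb
      subst ha; subst hb
      rwa [p.getVert_zero]
  · rw [hl]
    refine List.nodup_cons.2 ⟨?_, ?_⟩
    · intro hmem
      rcases List.mem_append.1 hmem with h | h
      · exact hu (descL_subset_support hb1 h)
      · exact hu (ascL_subset_support hb2 h)
    · refine List.Nodup.append (nodup_descL hp hb1) (nodup_ascL hp hb2) ?_
      intro z h1' h2'
      obtain ⟨t1, ha1, ha2, rfl⟩ := mem_descL_iff.1 h1'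
      obtain ⟨t2, hb1', hb2', heq⟩ := mem_ascL_iff.1 h2'
      have := getVert_inj hp (i := t2) (j := t1) (by omega) (by omega) heq
      omega
  · rw [hl]
    simp only [List.length_cons, List.length_append, length_descL, length_ascL]
    omega

/-- SL4 : mirror of SL3 at the `y` end. -/
lemma no_crossover_end (hp : p.IsPath)
    (hmax : ∀ ⦃c d : V⦄ (q : G.Walk c d), q.IsPath → q.length ≤ p.length)
    {u : V} (hu : u ∉ p.support) {t : ℕ} (ht : 1 ≤ t) (ht' : t ≤ p.length)
    (h1 : G.Adj u (p.getVert t)) (h2 : G.Adj y (p.getVert (t-1))) : False := by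
  have hrev : ∀ i, p.reverse.getVert i = p.getVert (p.length - i) := fun i => p.getVert_reverse i
  refine no_crossover_start (p := p.reverse) hp.reverse
    (by intro c d q hq; rw [Walk.length_reverse]; exact hmax q hq)
    (by rwa [Walk.support_reverse, List.mem_reverse]) (t := p.length - t) ?_ ?_ ?_
  · rw [Walk.length_reverse]; omega
  · rw [hrev]
    have : p.length - (p.length - t) = t := by omega
    rwa [this]
  · rw [hrev]
    have : p.length - (p.length - t + 1) = t - 1 := by omega
    rwa [this]

end Surgery


section Surgery2

variable {G : SimpleGraph V} {x y : V} {p : G.Walk x y}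

/-- SL5 : two (possibly equal) off-path vertices attached at consecutive path positions. -/
lemma no_consecutive_attach (hp : p.IsPath)
    (hmax : ∀ ⦃c d : V⦄ (q : G.Walk c d), q.IsPath → q.length ≤ p.length)
    {u u' : V} (hu : u ∉ p.support) (hu' : u' ∉ p.support)
    (huu' : u = u' ∨ G.Adj u u') {t : ℕ} (ht : t < p.length)
    (h1 : G.Adj (p.getVert t) u) (h2 : G.Adj u' (p.getVert (t+1))) : False := by
  set L := p.length with hL
  have hb1 : (0:ℕ) + (t+1) ≤ L + 1 := by omega
  have hb2 : (t+1) + (L-t) ≤ L + 1 := by omega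
  have hne1 : ascL p 0 (t+1) ≠ [] := ascL_ne_nil _ (by omega)
  have hne2 : ascL p (t+1) (L-t) ≠ [] := ascL_ne_nil _ (by omega)
  have hchain2 : (ascL p (t+1) (L-t)).Chain' G.Adj := chain'_ascL _ _ hb2
  have hh2 : (ascL p (t+1) (L-t)).head? = some (p.getVert (t+1)) := head?_ascL _ (by omega)
  have hlast1 : (ascL p 0 (t+1)).getLast? = some (p.getVert t) := by
    rw [getLast?_ascL _ (by omega)]
    congr 2
    omega
  have hnd1 : (ascL p 0 (t+1)).Nodup := nodup_ascL hp hb1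
  have hnd2 : (ascL p (t+1) (L-t)).Nodup := nodup_ascL hp hb2
  have hdisj : ∀ z, z ∈ ascL p 0 (t+1) → z ∈ ascL p (t+1) (L-t) → False := by
    intro z hz1 hz2
    obtain ⟨t1, ha1, ha2, rfl⟩ := mem_ascL_iff.1 hz1
    obtain ⟨t2, hb1', hb2', heq⟩ := mem_ascL_iff.1 hz2
    have := getVert_inj hp (i := t2) (j := t1) (by omega) (by omega) heq
    omega
  rcases huu' with rfl | hadj
  · -- single insertion
    set l : List V := ascL p 0 (t+1) ++ (u :: ascL p (t+1) (L-t)) with hl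
    refine no_long_list hmax l ?_ ?_ ?_
    · refine List.IsChain.append (chain'_ascL _ _ hb1) ?_ ?_
      · rw [List.isChain_cons]
        exact ⟨by intro z hz; rw [hh2] at hz; simp only [Option.mem_some_iff] at hz; subst hz; exact h2, hchain2⟩
      · intro a ha b hb
        rw [hlast1] at ha
        simp only [List.head?_cons, Option.mem_some_iff] at ha hb
        subst ha; subst hb
        exact h1
    · refine List.Nodup.append hnd1 ?_ ?_
      · exact List.nodup_cons.2 ⟨fun h => hu (ascL_subset_support hb2 h), hnd2⟩
      · intro z hz1 hz2
        rcases List.mem_cons.1 hz2 with rfl | hz2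
        · exact hu (ascL_subset_support hb1 hz1)
        · exact hdisj z hz1 hz2
    · rw [hl]
      simp only [List.length_append, List.length_cons, length_ascL]
      omega
  · -- double insertion
    set l : List V := ascL p 0 (t+1) ++ (u :: u' :: ascL p (t+1) (L-t)) with hl
    have hne : u ≠ u' := G.ne_of_adj hadj
    refine no_long_list hmax l ?_ ?_ ?_
    · refine List.IsChain.append (chain'_ascL _ _ hb1) ?_ ?_
      · rw [List.isChain_cons, List.isChain_cons]
        refine ⟨by simp [hadj], ?_, hchain2⟩
        intro z hz; rw [hh2] at hz; simp only [Option.mem_some_iff] at hz; subst hz; exact h2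
      · intro a ha b hb
        rw [hlast1] at ha
        simp only [List.head?_cons, Option.mem_some_iff] at ha hb
        subst ha; subst hb
        exact h1
    · refine List.Nodup.append hnd1 ?_ ?_
      · refine List.nodup_cons.2 ⟨?_, List.nodup_cons.2 ⟨fun h => hu' (ascL_subset_support hb2 h), hnd2⟩⟩
        intro h
        rcases List.mem_cons.1 h with rfl | h
        · exact hne rfl
        · exact hu (ascL_subset_support hb2 h)
      · intro z hz1 hz2
        rcases List.mem_cons.1 hz2 with rfl | hz2
        · exact hu (ascL_subset_support hb1 hz1)
        · rcases List.mem_cons.1 hz2 with rfl | hz2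
          · exact hu' (ascL_subset_support hb1 hz1)
          · exact hdisj z hz1 hz2
    · rw [hl]
      simp only [List.length_append, List.length_cons, length_ascL]
      omega

/-- SL6 : attach + crossover rotation. -/
lemma no_attach_crossover (hp : p.IsPath)
    (hmax : ∀ ⦃c d : V⦄ (q : G.Walk c d), q.IsPath → q.length ≤ p.length)
    {u : V} (hu : u ∉ p.support) {t s : ℕ} (hts : t < s) (hsL : s + 1 ≤ p.length)
    (h1 : G.Adj u (p.getVert t)) (hys : G.Adj y (p.getVert s)) (hxs : G.Adj x (p.getVert (s+1))) :
    False := by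
  set L := p.length with hL
  have hb1 : (0:ℕ) + (t+1) ≤ L + 1 := by omega
  have hb2 : (s+1) + (L-s) ≤ L + 1 := by omega
  have hb3 : (t+1) + (s-t) ≤ L + 1 := by omega
  have hne1 : descL p 0 (t+1) ≠ [] := descL_ne_nil _ (by omega)
  have hne2 : ascL p (s+1) (L-s) ≠ [] := ascL_ne_nil _ (by omega)
  have hne3 : descL p (t+1) (s-t) ≠ [] := descL_ne_nil _ (by omega)
  set l : List V := u :: (descL p 0 (t+1) ++ (ascL p (s+1) (L-s) ++ descL p (t+1) (s-t))) with hl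
  refine no_long_list hmax l ?_ ?_ ?_
  · rw [hl, show @List.Chain' V = List.IsChain from rfl, List.isChain_cons]
    constructor
    · intro z hz
      rw [head?_append' _ _ hne1, head?_descL _ (by omega)] at hz
      simp only [Option.mem_some_iff] at hz
      subst hz
      have : 0 + (t+1) - 1 = t := by omega
      rwa [this]
    · refine List.IsChain.append (chain'_descL _ _ hb1) ?_ ?_
      · refine List.IsChain.append (chain'_ascL _ _ hb2) (chain'_descL _ _ hb3) ?_
        intro a ha b hb
        rw [getLast?_ascL _ (by omega)] at ha
        rw [head?_descL _ (by omega)] at hb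
        simp only [Option.mem_some_iff] at ha hb
        subst ha; subst hb
        have e1 : (s+1) + (L-s) - 1 = L := by omega
        have e2 : (t+1) + (s-t) - 1 = s := by omega
        rw [e1, e2, hL, p.getVert_length]
        exact hys
      · intro a ha b hb
        rw [getLast?_descL _ (by omega)] at ha
        rw [head?_append' _ _ hne2, head?_ascL _ (by omega)] at hb
        simp only [Option.mem_some_iff] at ha hb
        subst ha; subst hb
        rwa [p.getVert_zero]
  · rw [hl]
    refine List.nodup_cons.2 ⟨?_, ?_⟩
    · intro hmem
      rcases List.mem_append.1 hmem with h | h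
      · exact hu (descL_subset_support hb1 h)
      · rcases List.mem_append.1 h with h | h
        · exact hu (ascL_subset_support hb2 h)
        · exact hu (descL_subset_support hb3 h)
    · refine List.Nodup.append (nodup_descL hp hb1) ?_ ?_
      · refine List.Nodup.append (nodup_ascL hp hb2) (nodup_descL hp hb3) ?_
        intro z hz1 hz2
        obtain ⟨t1, ha1, ha2, rfl⟩ := mem_ascL_iff.1 hz1
        obtain ⟨t2, hc1, hc2, heq⟩ := mem_descL_iff.1 hz2
        have := getVert_inj hp (i := t2) (j := t1) (by omega) (by omega) heq
        omega
      · intro z hz1 hz2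
        obtain ⟨t1, ha1, ha2, rfl⟩ := mem_descL_iff.1 hz1
        rcases List.mem_append.1 hz2 with h | h
        · obtain ⟨t2, hc1, hc2, heq⟩ := mem_ascL_iff.1 h
          have := getVert_inj hp (i := t2) (j := t1) (by omega) (by omega) heq
          omega
        · obtain ⟨t2, hc1, hc2, heq⟩ := mem_descL_iff.1 h
          have := getVert_inj hp (i := t2) (j := t1) (by omega) (by omega) heq
          omega
  · rw [hl]
    simp only [List.length_cons, List.length_append, length_descL, length_ascL]
    omega

end Surgery2


section GraphLevel

variable {G : SimpleGraph V}

lemma exists_longest [Fintype V] (G : SimpleGraph V) (hne : Nonempty V) :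
    ∃ (a b : V) (p : G.Walk a b), IsLongestPath G p := by
  classical
  set S : Set ℕ := {n | ∃ (a b : V) (p : G.Walk a b), p.IsPath ∧ p.length = n} with hS
  have hSne : S.Nonempty := ⟨0, hne.some, hne.some, .nil, by simp, rfl⟩
  have hbdd : BddAbove S := by
    refine ⟨Fintype.card V, ?_⟩
    rintro n ⟨a, b, p, hp, rfl⟩
    exact le_of_lt hp.length_lt
  obtain ⟨a, b, p, hp, hl⟩ := Nat.sSup_mem hSne hbdd
  refine ⟨a, b, p, hp, ?_⟩
  intro c d q hq
  rw [hl]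
  exact le_csSup hbdd ⟨c, d, q, hq, rfl⟩

lemma exists_boundary {S : Set V} {c d : V} (q : G.Walk c d) (hc : c ∈ S) (hd : d ∉ S) :
    ∃ u z, u ∈ S ∧ z ∉ S ∧ G.Adj u z ∧ z ∈ q.support := by
  induction q with
  | nil => exact absurd hc hd
  | @cons a e b h q ih =>
      by_cases he : e ∈ S
      · obtain ⟨u, z, h1, h2, h3, h4⟩ := ih he hd
        exact ⟨u, z, h1, h2, h3, by simp [Walk.support_cons, h4]⟩
      · exact ⟨a, e, hc, he, h, by simp [Walk.support_cons]⟩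

variable {x y : V} {p : G.Walk x y}

lemma length_pos_of_off (hconn : G.Connected) (hp : p.IsPath)
    (hmax : ∀ ⦃c d : V⦄ (q : G.Walk c d), q.IsPath → q.length ≤ p.length)
    {u : V} (hu : u ∉ p.support) : 1 ≤ p.length := by
  have hux : u ≠ x := fun h => hu (h ▸ p.start_mem_support)
  obtain ⟨W⟩ := hconn.preconnected u x
  have hnil : ¬ W.Nil := Walk.not_nil_of_ne hux
  have hadj : G.Adj u (W.getVert 1) := Walk.adj_snd hnil
  have hpath : (Walk.cons hadj .nil).IsPath := by
    rw [Walk.isPath_def]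
    simp [G.ne_of_adj hadj]
  have := hmax _ hpath
  simpa using this

lemma start_ne_end (hconn : G.Connected) (hp : p.IsPath)
    (hmax : ∀ ⦃c d : V⦄ (q : G.Walk c d), q.IsPath → q.length ≤ p.length)
    {u : V} (hu : u ∉ p.support) : x ≠ y := by
  intro h
  have hL := length_pos_of_off hconn hp hmax hu
  have h0 : p.getVert 0 = p.getVert p.length := by
    rw [p.getVert_zero, p.getVert_length, h]
  have := getVert_inj hp (by omega) (le_refl _) h0
  omega

lemma not_adj_ends_conn (hconn : G.Connected) (hp : p.IsPath)
    (hmax : ∀ ⦃c d : V⦄ (q : G.Walk c d), q.IsPath → q.length ≤ p.length)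
    {u : V} (hu : u ∉ p.support) : ¬ G.Adj x y := by
  intro hxy
  obtain ⟨W⟩ := hconn.preconnected u x
  obtain ⟨u', z, h1, h2, h3, _⟩ :=
    exists_boundary (S := {z | z ∉ p.support}) W hu (by simp [p.start_mem_support])
  simp only [Set.mem_setOf_eq, not_not] at h1 h2
  obtain ⟨s, rfl, hs⟩ := Walk.mem_support_iff_exists_getVert.1 h2
  exact not_adj_ends hp hmax h1 hs h3 hxy

lemma no_indep_four [Fintype V] (halpha : ∀ A : Set V, IsIndepSet G A → A.ncard ≤ 3)
    {a b c d : V} (hab : a ≠ b) (hac : a ≠ c) (had : a ≠ d) (hbc : b ≠ c) (hbd : b ≠ d)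
    (hcd : c ≠ d) (nab : ¬ G.Adj a b) (nac : ¬ G.Adj a c) (nad : ¬ G.Adj a d)
    (nbc : ¬ G.Adj b c) (nbd : ¬ G.Adj b d) (ncd : ¬ G.Adj c d) : False := by
  have hba : ¬ G.Adj b a := fun h => nab h.symm
  have hca : ¬ G.Adj c a := fun h => nac h.symm
  have hda : ¬ G.Adj d a := fun h => nad h.symm
  have hcb : ¬ G.Adj c b := fun h => nbc h.symm
  have hdb : ¬ G.Adj d b := fun h => nbd h.symm
  have hdc : ¬ G.Adj d c := fun h => ncd h.symm
  have hindep : IsIndepSet G ({a, b, c, d} : Set V) := by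
    intro s hs t ht hne
    simp only [Set.mem_insert_iff, Set.mem_singleton_iff] at hs ht
    rcases hs with rfl | rfl | rfl | rfl <;> rcases ht with rfl | rfl | rfl | rfl <;>
      first
        | exact absurd rfl hne
        | assumption
  have hcard : ({a, b, c, d} : Set V).ncard = 4 := by
    rw [Set.ncard_insert_of_notMem (by simp [hab, hac, had]),
      Set.ncard_insert_of_notMem (by simp [hbc, hbd]),
      Set.ncard_insert_of_notMem (by simp [hcd]), Set.ncard_singleton]
  have := halpha _ hindep
  omega

lemma off_clique [Fintype V] (hconn : G.Connected)
    (halpha : ∀ A : Set V, IsIndepSet G A → A.ncard ≤ 3) (hp : p.IsPath)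
    (hmax : ∀ ⦃c d : V⦄ (q : G.Walk c d), q.IsPath → q.length ≤ p.length)
    {u w : V} (hu : u ∉ p.support) (hw : w ∉ p.support) (huw : u ≠ w) : G.Adj u w := by
  by_contra hlast
  have hxy := start_ne_end hconn hp hmax hu
  have nxy := not_adj_ends_conn hconn hp hmax hu
  refine no_indep_four halpha (a := x) (b := y) (c := u) (d := w) hxy ?_ ?_ ?_ ?_ huw nxy ?_ ?_ ?_ ?_ hlast
  · exact fun h => hu (h ▸ p.start_mem_support)
  · exact fun h => hw (h ▸ p.start_mem_support)
  · exact fun h => hu (h ▸ p.end_mem_support)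
  · exact fun h => hw (h ▸ p.end_mem_support)
  · exact fun h => hu (adj_start_mem_support hp hmax h.symm)
  · exact fun h => hw (adj_start_mem_support hp hmax h.symm)
  · exact fun h => hu (adj_end_mem_support hp hmax h.symm)
  · exact fun h => hw (adj_end_mem_support hp hmax h.symm)

lemma dominate [Fintype V] (hconn : G.Connected)
    (halpha : ∀ A : Set V, IsIndepSet G A → A.ncard ≤ 3) (hp : p.IsPath)
    (hmax : ∀ ⦃c d : V⦄ (q : G.Walk c d), q.IsPath → q.length ≤ p.length)
    {u z : V} (hu : u ∉ p.support) (hz1 : z ≠ x) (hz2 : z ≠ y) (hz3 : z ≠ u) :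
    G.Adj z x ∨ G.Adj z y ∨ G.Adj z u := by
  by_contra hc
  push_neg at hc
  obtain ⟨h1, h2, h3⟩ := hc
  have hxy := start_ne_end hconn hp hmax hu
  have nxy := not_adj_ends_conn hconn hp hmax hu
  refine no_indep_four halpha (a := x) (b := y) (c := u) (d := z) hxy ?_ hz1.symm ?_ hz2.symm
    hz3.symm nxy ?_ (fun h => h1 h.symm) ?_ (fun h => h2 h.symm) (fun h => h3 h.symm)
  · exact fun h => hu (h ▸ p.start_mem_support)
  · exact fun h => hu (h ▸ p.end_mem_support)
  · exact fun h => hu (adj_start_mem_support hp hmax h.symm)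
  · exact fun h => hu (adj_end_mem_support hp hmax h.symm)

end GraphLevel




section Attach

variable {G : SimpleGraph V} {x y : V}

/-- `t` is an attachment position of the outside of `P` on `P`. -/
def AttachIdx (G : SimpleGraph V) {x y : V} (P : G.Walk x y) (t : ℕ) : Prop :=
  t ≤ P.length ∧ ∃ z, z ∉ P.support ∧ G.Adj z (P.getVert t)

variable {P : G.Walk x y}

lemma attach_bounds (hp : P.IsPath)
    (hmax : ∀ ⦃c d : V⦄ (q : G.Walk c d), q.IsPath → q.length ≤ P.length)
    {t : ℕ} (ht : AttachIdx G P t) : 1 ≤ t ∧ t + 1 ≤ P.length := by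
  obtain ⟨htL, z, hz, hadj⟩ := ht
  constructor
  · rcases Nat.eq_zero_or_pos t with rfl | h
    · rw [P.getVert_zero] at hadj
      exact absurd (adj_start_mem_support hp hmax hadj) hz
    · exact h
  · rcases eq_or_lt_of_le htL with rfl | h
    · rw [P.getVert_length] at hadj
      exact absurd (adj_end_mem_support hp hmax hadj) hz
    · omega

lemma attach_exists (hconn : G.Connected) {u0 : V} (hu0 : u0 ∉ P.support) :
    ∃ t, AttachIdx G P t := by
  obtain ⟨W⟩ := hconn.preconnected u0 x
  obtain ⟨u', z, h1, h2, h3, _⟩ :=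
    exists_boundary (S := {z | z ∉ P.support}) W hu0 (by simp [P.start_mem_support])
  simp only [Set.mem_setOf_eq, not_not] at h1 h2
  obtain ⟨s, rfl, hs⟩ := Walk.mem_support_iff_exists_getVert.1 h2
  exact ⟨s, hs, u', h1, h3⟩

lemma attach_not_lt [Fintype V] (hconn : G.Connected)
    (halpha : ∀ A : Set V, IsIndepSet G A → A.ncard ≤ 3) (hp : P.IsPath)
    (hmax : ∀ ⦃c d : V⦄ (q : G.Walk c d), q.IsPath → q.length ≤ P.length)
    {t1 t2 : ℕ} (h1 : AttachIdx G P t1) (h2 : AttachIdx G P t2) (hlt : t1 < t2) : False := by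
  classical
  set L := P.length with hL
  obtain ⟨u1, hu1, hadj1⟩ := h1.2
  -- replace t2 by the least attachment index above t1
  set T : Set ℕ := {t | AttachIdx G P t ∧ t1 < t} with hT
  have hTne : T.Nonempty := ⟨t2, h2, hlt⟩
  set t' := sInf T with ht'
  have ht'mem : t' ∈ T := Nat.sInf_mem hTne
  obtain ⟨⟨ht'L, u2, hu2, hadj2⟩, ht'gt⟩ := ht'mem
  have hb1 := attach_bounds hp hmax h1
  have hb2 := attach_bounds hp hmax ⟨ht'L, u2, hu2, hadj2⟩
  -- no attachment strictly between t1 and t'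
  have hno : ∀ s, t1 < s → s < t' → ¬ AttachIdx G P s := by
    intro s hs1 hs2 hatt
    exact Nat.notMem_of_lt_sInf hs2 ⟨hatt, hs1⟩
  -- interior vertices between t1 and t' are adjacent to x or y
  have hdom : ∀ s, t1 < s → s < t' → G.Adj (P.getVert s) x ∨ G.Adj (P.getVert s) y := by
    intro s hs1 hs2
    have hsL : s ≤ L := by omega
    have hz1 : P.getVert s ≠ x := by
      intro h
      have : P.getVert s = P.getVert 0 := by rw [h, P.getVert_zero]
      have := getVert_inj hp hsL (by omega) this
      omega
    have hz2 : P.getVert s ≠ y := by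
      intro h
      have : P.getVert s = P.getVert L := by rw [h, P.getVert_length]
      have := getVert_inj hp hsL (le_refl _) this
      omega
    have hz3 : P.getVert s ≠ u1 := by
      intro h
      exact hu1 (h ▸ getVert_mem_support P hsL)
    rcases dominate hconn halpha hp hmax hu1 hz1 hz2 hz3 with h | h | h
    · exact Or.inl h
    · exact Or.inr h
    · exact absurd ⟨hsL, u1, hu1, h.symm⟩ (hno s hs1 hs2)
  -- t' ≥ t1 + 2
  have hsep : t1 + 2 ≤ t' := by
    rcases Nat.lt_or_ge (t1 + 1) t' with h | h
    · omega
    · have heq : t' = t1 + 1 := by omega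
      have hadj2' : G.Adj u2 (P.getVert (t1+1)) := heq ▸ hadj2
      exact absurd (no_consecutive_attach hp hmax hu1 hu2
        (by
          rcases eq_or_ne u1 u2 with h' | h'
          · exact Or.inl h'
          · exact Or.inr (off_clique hconn halpha hp hmax hu1 hu2 h'))
        (by omega) hadj1.symm hadj2') not_false
  -- v_{t1+1} is adjacent to y
  have hy1 : G.Adj y (P.getVert (t1+1)) := by
    have hnx : ¬ G.Adj x (P.getVert (t1+1)) := by
      intro h
      exact no_crossover_start hp hmax hu1 (by omega) hadj1 h
    rcases hdom (t1+1) (by omega) (by omega) with h | h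
    · exact absurd h.symm hnx
    · exact h.symm
  -- the largest index in (t1, t') adjacent to y
  set S' : Set ℕ := {s | t1 < s ∧ s < t' ∧ G.Adj y (P.getVert s)} with hS'
  have hS'ne : S'.Nonempty := ⟨t1+1, by omega, by omega, hy1⟩
  have hS'bdd : BddAbove S' := ⟨t', fun s hs => le_of_lt hs.2.1⟩
  set s' := sSup S' with hs'
  have hs'mem : s' ∈ S' := Nat.sSup_mem hS'ne hS'bdd
  obtain ⟨hs'1, hs'2, hs'adj⟩ := hs'mem
  -- s' + 1 < t'
  have hs'ne : s' + 1 ≠ t' := by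
    intro h
    refine no_crossover_end hp hmax hu2 (t := t') (by omega) (by omega) hadj2 ?_
    have : t' - 1 = s' := by omega
    rwa [this]
  have hs'lt : s' + 1 < t' := by omega
  have hny : ¬ G.Adj y (P.getVert (s'+1)) := by
    intro h
    have : s' + 1 ≤ s' := le_csSup hS'bdd ⟨by omega, by omega, h⟩
    omega
  have hx : G.Adj x (P.getVert (s'+1)) := by
    rcases hdom (s'+1) (by omega) (by omega) with h | h
    · exact h.symm
    · exact absurd h.symm hny
  exact no_attach_crossover hp hmax hu1 hs'1 (by omega) hadj1 hs'adj hx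

end Attach

section Final

variable {G : SimpleGraph V}

lemma exists_subwalk {a b c e : V} (q : G.Walk a b) (hc : c ∈ q.support) (he : e ∈ q.support) :
    ∃ r : G.Walk c e, ∀ z ∈ r.support, z ∈ q.support := by
  classical
  by_cases h2 : e ∈ (q.dropUntil c hc).support
  · exact ⟨(q.dropUntil c hc).takeUntil e h2, fun z hz =>
      Walk.support_dropUntil_subset q hc (Walk.support_takeUntil_subset _ h2 hz)⟩
  · have h1 : e ∈ (q.takeUntil c hc).support := by
      have h' := he
      rw [← Walk.take_spec q hc, Walk.mem_support_append_iff] at h'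
      rcases h' with h' | h'
      · exact h'
      · exact absurd h' h2
    have h1' : e ∈ (q.takeUntil c hc).reverse.support := by
      rwa [Walk.support_reverse, List.mem_reverse]
    refine ⟨((q.takeUntil c hc).reverse).takeUntil e h1', fun z hz => ?_⟩
    have := Walk.support_takeUntil_subset _ h1' hz
    rw [Walk.support_reverse, List.mem_reverse] at this
    exact Walk.support_takeUntil_subset q hc this

end Final

/-- every connected graph with independence number at most 3 has a Gallai
vertex (i.e. `4P₁` is a fixer). -/
theorem stmt13 [Fintype V] (G : SimpleGraph V) (hconn : G.Connected)
    (halpha : ∀ A : Set V, IsIndepSet G A → A.ncard ≤ 3) :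
    ∃ v, IsGallaiVertex G v := by
  classical
  have hne : Nonempty V := hconn.nonempty
  obtain ⟨x, y, P, hPp, hPmax⟩ := exists_longest G hne
  by_cases hham : ∀ z : V, z ∈ P.support
  · -- a Hamiltonian longest path : every vertex is a Gallai vertex
    refine ⟨x, ?_⟩
    intro a b q hq hqmax
    have hlen : q.length = P.length := le_antisymm (hPmax q hq) (hqmax P hPp)
    have hPcard : P.support.toFinset = Finset.univ :=
      Finset.eq_univ_iff_forall.2 fun z => List.mem_toFinset.2 (hham z)
    have h1 : P.support.toFinset.card = Fintype.card V := by rw [hPcard, Finset.card_univ]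
    have h2 : q.support.toFinset.card = Fintype.card V := by
      rw [List.toFinset_card_of_nodup hq.support_nodup, Walk.length_support, hlen,
        ← Walk.length_support, ← List.toFinset_card_of_nodup hPp.support_nodup]
      exact h1
    have h3 : q.support.toFinset = Finset.univ := Finset.eq_univ_of_card _ h2
    have h4 : x ∈ q.support.toFinset := h3 ▸ Finset.mem_univ x
    exact List.mem_toFinset.1 h4
  · -- non-Hamiltonian case : the unique attachment vertex is a Gallai vertex
    push_neg at hham
    obtain ⟨u0, hu0⟩ := hham
    obtain ⟨m, hm⟩ := attach_exists hconn hu0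
    set w := P.getVert m with hwdef
    have hmbd := attach_bounds hPp hPmax hm
    have huniq : ∀ t, AttachIdx G P t → t = m := by
      intro t ht
      rcases lt_trichotomy t m with h | h | h
      · exact absurd (attach_not_lt hconn halpha hPp hPmax ht hm h) not_false
      · exact h
      · exact absurd (attach_not_lt hconn halpha hPp hPmax hm ht h) not_false
    have hC1 : ∀ z z', z ∉ P.support → G.Adj z z' → z' ∉ P.support ∨ z' = w := by
      intro z z' hz hadj
      by_cases h : z' ∈ P.support
      · obtain ⟨s, rfl, hs⟩ := Walk.mem_support_iff_exists_getVert.1 h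
        right
        rw [hwdef, huniq s ⟨hs, z, hz, hadj⟩]
      · exact Or.inl h
    refine ⟨w, ?_⟩
    intro a b q hq hqmax
    by_contra hwq
    have hlen : q.length = P.length := le_antisymm (hPmax q hq) (hqmax P hPp)
    by_cases hQK : ∃ c, c ∈ q.support ∧ c ∉ P.support
    · obtain ⟨c, hcq, hcK⟩ := hQK
      by_cases hQP : ∃ e, e ∈ q.support ∧ e ∈ P.support
      · -- q crosses the boundary of P's support : it must contain w
        obtain ⟨e, heq, heP⟩ := hQP
        obtain ⟨r, hrsub⟩ := exists_subwalk q hcq heq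
        obtain ⟨u, z, h1, h2, h3, h4⟩ :=
          exists_boundary (S := {z | z ∉ P.support}) r hcK (by simp [heP])
        simp only [Set.mem_setOf_eq, not_not] at h1 h2
        rcases hC1 u z h1 h3 with h | rfl
        · exact h h2
        · exact hwq (hrsub _ h4)
      · -- q lives entirely off P : its complement contains both ends of P, a contradiction
        push_neg at hQP
        have hxq : x ∉ q.support := fun h => hQP x h P.start_mem_support
        have hyq : y ∉ q.support := fun h => hQP y h P.end_mem_support
        have hxyne : x ≠ y := start_ne_end hconn hPp hPmax hu0
        exact not_adj_ends_conn hconn hPp hPmax hu0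
          (off_clique hconn halpha hq hqmax hxq hyq hxyne)
    · -- q lives entirely on P but misses w : impossible by counting
      push_neg at hQK
      have hu0q : u0 ∉ q.support := fun h => hu0 (hQK u0 h)
      have hwP : w ∈ P.support := getVert_mem_support P (by omega)
      have hcompl : ∀ z, z ∉ q.support → z ∉ P.support ∨ z = w := by
        intro z hz
        by_cases hzP : z ∈ P.support
        · have hzu0 : u0 ≠ z := fun h => hu0 (h ▸ hzP)
          have hadj : G.Adj u0 z := off_clique hconn halpha hq hqmax hu0q hz hzu0
          rcases hC1 u0 z hu0 hadj with h | h
          · exact absurd hzP h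
          · exact Or.inr h
        · exact Or.inl hzP
      set SQ : Set V := {z | z ∈ q.support} with hSQ
      set SP : Set V := {z | z ∈ P.support} with hSP
      have hSQc : SQᶜ = insert w SPᶜ := by
        ext z
        simp only [Set.mem_compl_iff, hSQ, hSP, Set.mem_setOf_eq, Set.mem_insert_iff]
        constructor
        · intro hz
          rcases hcompl z hz with h | h
          · exact Or.inr h
          · exact Or.inl h
        · rintro (rfl | h)
          · exact hwq
          · exact fun hzq => h (hQK z hzq)
      have hwSP : w ∉ SPᶜ := by
        simp only [Set.mem_compl_iff, hSP, Set.mem_setOf_eq, not_not]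
        exact hwP
      have e1 : SQ.ncard = P.length + 1 := by
        have : SQ = ↑q.support.toFinset := by ext z; simp [hSQ]
        rw [this, Set.ncard_coe_finset, List.toFinset_card_of_nodup hq.support_nodup,
          Walk.length_support, hlen]
      have e2 : SP.ncard = P.length + 1 := by
        have : SP = ↑P.support.toFinset := by ext z; simp [hSP]
        rw [this, Set.ncard_coe_finset, List.toFinset_card_of_nodup hPp.support_nodup,
          Walk.length_support]
      have e3 : SQᶜ.ncard = SPᶜ.ncard + 1 := by
        rw [hSQc, Set.ncard_insert_of_notMem hwSP]
      have e4 : SQ.ncard + SQᶜ.ncard = Nat.card V := Set.ncard_add_ncard_compl _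
      have e5 : SP.ncard + SPᶜ.ncard = Nat.card V := Set.ncard_add_ncard_compl _
      omega



end GallaiFormal
end
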